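/- arXiv:1506.01604 — 4 statements merged into one kernel-verified Lean document; each statement's English description precedes it below -/
import Mathlib

section
/- The ℤ-submodule of the integral group ring ℤ[SL₂(F)] spanned by the seven support-class elements A, B, C, D₊, D₋, E₊, E₋ is closed under multiplication: for any x, y in the ℤ-span of {A, B, C, D₊, D₋, E₊, E₋}, the product x·y again lies in this span. Hence this span is a (non-unital) subring of ℤ[SL₂(F)]. -/
open MonoidAlgebra

/-- Sum of all elements of `SL₂(F)` whose support pattern is given by the four
Booleans (`true` = the entry is nonzero, `false` = the entry is zero). -/
noncomputable def suppClass (R : Type*) [CommRing R] (F : Type*) [Field F] [Fintype F]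
    [DecidableEq F] (b₁₁ b₁₂ b₂₁ b₂₂ : Bool) :
    MonoidAlgebra R (Matrix.SpecialLinearGroup (Fin 2) F) :=
  ∑ g ∈ Finset.univ.filter
      (fun g : Matrix.SpecialLinearGroup (Fin 2) F =>
        (b₁₁ = true ↔ (g : Matrix (Fin 2) (Fin 2) F) 0 0 ≠ 0) ∧
        (b₁₂ = true ↔ (g : Matrix (Fin 2) (Fin 2) F) 0 1 ≠ 0) ∧
        (b₂₁ = true ↔ (g : Matrix (Fin 2) (Fin 2) F) 1 0 ≠ 0) ∧
        (b₂₂ = true ↔ (g : Matrix (Fin 2) (Fin 2) F) 1 1 ≠ 0)),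
    MonoidAlgebra.of R (Matrix.SpecialLinearGroup (Fin 2) F) g

/-- The support class `A` (diagonal matrices). -/
noncomputable def elA (R : Type*) [CommRing R] (F : Type*) [Field F] [Fintype F] [DecidableEq F] :=
  suppClass R F true false false true
/-- The support class `B` (antidiagonal matrices). -/
noncomputable def elB (R : Type*) [CommRing R] (F : Type*) [Field F] [Fintype F] [DecidableEq F] :=
  suppClass R F false true true false
/-- The support class `C` (matrices with all entries nonzero). -/
noncomputable def elC (R : Type*) [CommRing R] (F : Type*) [Field F] [Fintype F] [DecidableEq F] :=
  suppClass R F true true true true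
/-- The support class `D₊` (upper triangular with nonzero entries). -/
noncomputable def elDp (R : Type*) [CommRing R] (F : Type*) [Field F] [Fintype F] [DecidableEq F] :=
  suppClass R F true true false true
/-- The support class `D₋` (lower triangular with nonzero entries). -/
noncomputable def elDm (R : Type*) [CommRing R] (F : Type*) [Field F] [Fintype F] [DecidableEq F] :=
  suppClass R F true false true true
/-- The support class `E₊`. -/
noncomputable def elEp (R : Type*) [CommRing R] (F : Type*) [Field F] [Fintype F] [DecidableEq F] :=
  suppClass R F true true true false
/-- The support class `E₋`. -/
noncomputable def elEm (R : Type*) [CommRing R] (F : Type*) [Field F] [Fintype F] [DecidableEq F] :=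
  suppClass R F false true true true


open MonoidAlgebra Finset




namespace SCP

variable {F : Type*} [Field F] [Fintype F] [DecidableEq F]

abbrev SL (F : Type*) [Field F] [Fintype F] [DecidableEq F] := Matrix.SpecialLinearGroup (Fin 2) F

/-- the filter predicate -/
def Cond (b₁₁ b₁₂ b₂₁ b₂₂ : Bool) (g : SL F) : Prop :=
  (b₁₁ = true ↔ (g : Matrix (Fin 2) (Fin 2) F) 0 0 ≠ 0) ∧
  (b₁₂ = true ↔ (g : Matrix (Fin 2) (Fin 2) F) 0 1 ≠ 0) ∧
  (b₂₁ = true ↔ (g : Matrix (Fin 2) (Fin 2) F) 1 0 ≠ 0) ∧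
  (b₂₂ = true ↔ (g : Matrix (Fin 2) (Fin 2) F) 1 1 ≠ 0)

instance (b₁₁ b₁₂ b₂₁ b₂₂ : Bool) : DecidablePred (Cond (F := F) b₁₁ b₁₂ b₂₁ b₂₂) := by
  unfold Cond; infer_instance

instance : DecidableEq (SL F) := fun a b => decidable_of_iff (a.1 = b.1) Subtype.ext_iff.symm

lemma entry_mul (u v : SL F) (i j : Fin 2) :
    ((u * v : SL F) : Matrix (Fin 2) (Fin 2) F) i j
      = (u : Matrix (Fin 2) (Fin 2) F) i 0 * (v : Matrix (Fin 2) (Fin 2) F) 0 j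
        + (u : Matrix (Fin 2) (Fin 2) F) i 1 * (v : Matrix (Fin 2) (Fin 2) F) 1 j := by
  rw [Matrix.SpecialLinearGroup.coe_mul, Matrix.mul_apply, Fin.sum_univ_two]

lemma det_rel (g : SL F) :
    (g : Matrix (Fin 2) (Fin 2) F) 0 0 * (g : Matrix (Fin 2) (Fin 2) F) 1 1
      - (g : Matrix (Fin 2) (Fin 2) F) 0 1 * (g : Matrix (Fin 2) (Fin 2) F) 1 0 = 1 := by
  rw [← Matrix.det_fin_two]; exact g.prop

end SCP
namespace SCP
variable {F : Type*} [Field F] [Fintype F] [DecidableEq F]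

lemma suppClass_eq (b₁₁ b₁₂ b₂₁ b₂₂ : Bool) :
    suppClass ℤ F b₁₁ b₁₂ b₂₁ b₂₂
      = ∑ g ∈ univ.filter (Cond b₁₁ b₁₂ b₂₁ b₂₂), of ℤ (SL F) g := by
  unfold suppClass Cond
  congr 1

lemma of_mul_suppClass (t : SL F) (c₁₁ c₁₂ c₂₁ c₂₂ b₁₁ b₁₂ b₂₁ b₂₂ : Bool)
    (H : ∀ g : SL F, Cond c₁₁ c₁₂ c₂₁ c₂₂ g ↔ Cond b₁₁ b₁₂ b₂₁ b₂₂ (t * g)) :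
    of ℤ (SL F) t * suppClass ℤ F c₁₁ c₁₂ c₂₁ c₂₂ = suppClass ℤ F b₁₁ b₁₂ b₂₁ b₂₂ := by
  rw [suppClass_eq, suppClass_eq, Finset.mul_sum]
  refine Finset.sum_bij' (fun g _ => t * g) (fun h _ => t⁻¹ * h) ?_ ?_ ?_ ?_ ?_
  · intro a ha
    rw [mem_filter] at ha ⊢
    exact ⟨mem_univ _, (H a).1 ha.2⟩
  · intro a ha
    rw [mem_filter] at ha ⊢
    refine ⟨mem_univ _, (H (t⁻¹ * a)).2 ?_⟩
    rw [mul_inv_cancel_left]; exact ha.2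
  · intro a _; simp only [inv_mul_cancel_left]
  · intro a _; simp only [mul_inv_cancel_left]
  · intro a _; rw [← map_mul]

lemma suppClass_mul_of (t : SL F) (c₁₁ c₁₂ c₂₁ c₂₂ b₁₁ b₁₂ b₂₁ b₂₂ : Bool)
    (H : ∀ g : SL F, Cond c₁₁ c₁₂ c₂₁ c₂₂ g ↔ Cond b₁₁ b₁₂ b₂₁ b₂₂ (g * t)) :
    suppClass ℤ F c₁₁ c₁₂ c₂₁ c₂₂ * of ℤ (SL F) t = suppClass ℤ F b₁₁ b₁₂ b₂₁ b₂₂ := by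
  rw [suppClass_eq, suppClass_eq, Finset.sum_mul]
  refine Finset.sum_bij' (fun g _ => g * t) (fun h _ => h * t⁻¹) ?_ ?_ ?_ ?_ ?_
  · intro a ha
    rw [mem_filter] at ha ⊢
    exact ⟨mem_univ _, (H a).1 ha.2⟩
  · intro a ha
    rw [mem_filter] at ha ⊢
    refine ⟨mem_univ _, (H (a * t⁻¹)).2 ?_⟩
    rw [inv_mul_cancel_right]; exact ha.2
  · intro a _; simp only [mul_inv_cancel_right]
  · intro a _; simp only [inv_mul_cancel_right]
  · intro a _; rw [← map_mul]

end SCP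
namespace SCP
variable {F : Type*} [Field F] [Fintype F] [DecidableEq F]

/-- the Weyl element !![0,1;-1,0] -/
def w : SL F := ⟨!![0,1;-1,0], by simp [Matrix.det_fin_two]⟩

/-- its inverse !![0,-1;1,0] -/
def w' : SL F := ⟨!![0,-1;1,0], by simp [Matrix.det_fin_two]⟩

lemma w_mul_w' : (w : SL F) * w' = 1 := by
  apply Subtype.ext
  rw [Matrix.SpecialLinearGroup.coe_mul]
  show (!![0,1;-1,0] : Matrix (Fin 2) (Fin 2) F) * (!![0,-1;1,0] : Matrix (Fin 2) (Fin 2) F) = _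
  rw [Matrix.mul_fin_two, Matrix.SpecialLinearGroup.coe_one, Matrix.one_fin_two]
  norm_num

lemma w'_mul_w : (w' : SL F) * w = 1 := by
  apply Subtype.ext
  rw [Matrix.SpecialLinearGroup.coe_mul]
  show (!![0,-1;1,0] : Matrix (Fin 2) (Fin 2) F) * (!![0,1;-1,0] : Matrix (Fin 2) (Fin 2) F) = _
  rw [Matrix.mul_fin_two, Matrix.SpecialLinearGroup.coe_one, Matrix.one_fin_two]
  norm_num

lemma w_entry (i j : Fin 2) : ((w : SL F) : Matrix (Fin 2) (Fin 2) F) i j = !![0,1;-1,0] i j := rfl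
lemma w'_entry (i j : Fin 2) : ((w' : SL F) : Matrix (Fin 2) (Fin 2) F) i j = !![0,-1;1,0] i j := rfl

lemma of_w_mul (c₁₁ c₁₂ c₂₁ c₂₂ : Bool) :
    of ℤ (SL F) w * suppClass ℤ F c₁₁ c₁₂ c₂₁ c₂₂ = suppClass ℤ F c₂₁ c₂₂ c₁₁ c₁₂ := by
  refine of_mul_suppClass _ _ _ _ _ _ _ _ _ (fun g => ?_)
  unfold Cond
  simp only [entry_mul, w_entry]
  norm_num
  tauto

lemma of_w'_mul (c₁₁ c₁₂ c₂₁ c₂₂ : Bool) :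
    of ℤ (SL F) w' * suppClass ℤ F c₁₁ c₁₂ c₂₁ c₂₂ = suppClass ℤ F c₂₁ c₂₂ c₁₁ c₁₂ := by
  refine of_mul_suppClass _ _ _ _ _ _ _ _ _ (fun g => ?_)
  unfold Cond
  simp only [entry_mul, w'_entry]
  norm_num
  tauto

lemma mul_of_w (c₁₁ c₁₂ c₂₁ c₂₂ : Bool) :
    suppClass ℤ F c₁₁ c₁₂ c₂₁ c₂₂ * of ℤ (SL F) w = suppClass ℤ F c₁₂ c₁₁ c₂₂ c₂₁ := by
  refine suppClass_mul_of _ _ _ _ _ _ _ _ _ (fun g => ?_)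
  unfold Cond
  simp only [entry_mul, w_entry]
  norm_num
  tauto

lemma mul_of_w' (c₁₁ c₁₂ c₂₁ c₂₂ : Bool) :
    suppClass ℤ F c₁₁ c₁₂ c₂₁ c₂₂ * of ℤ (SL F) w' = suppClass ℤ F c₁₂ c₁₁ c₂₂ c₂₁ := by
  refine suppClass_mul_of _ _ _ _ _ _ _ _ _ (fun g => ?_)
  unfold Cond
  simp only [entry_mul, w'_entry]
  norm_num
  tauto

end SCP
namespace SCP
variable {F : Type*} [Field F] [Fintype F] [DecidableEq F]

/-- the A-class finset (the diagonal torus) -/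
def Aset : Finset (SL F) := univ.filter (Cond true false false true)

lemma Aset_spec {t : SL F} (ht : t ∈ (Aset : Finset (SL F))) :
    (t : Matrix (Fin 2) (Fin 2) F) 0 0 ≠ 0 ∧ (t : Matrix (Fin 2) (Fin 2) F) 0 1 = 0 ∧
    (t : Matrix (Fin 2) (Fin 2) F) 1 0 = 0 ∧ (t : Matrix (Fin 2) (Fin 2) F) 1 1 ≠ 0 := by
  rw [Aset, mem_filter] at ht
  obtain ⟨-, h1, h2, h3, h4⟩ := ht
  simp only [show (false = true) = False from by simp, false_iff, not_not] at h2 h3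
  exact ⟨h1.1 rfl, h2, h3, h4.1 rfl⟩

lemma of_diag_mul {t : SL F} (ht : t ∈ (Aset : Finset (SL F))) (c₁₁ c₁₂ c₂₁ c₂₂ : Bool) :
    of ℤ (SL F) t * suppClass ℤ F c₁₁ c₁₂ c₂₁ c₂₂ = suppClass ℤ F c₁₁ c₁₂ c₂₁ c₂₂ := by
  obtain ⟨h1, h2, h3, h4⟩ := Aset_spec ht
  refine of_mul_suppClass _ _ _ _ _ _ _ _ _ (fun g => ?_)
  unfold Cond
  simp only [entry_mul, h2, h3, zero_mul, mul_zero, add_zero, zero_add, mul_ne_zero_iff,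
    and_iff_right h1, and_iff_right h4]

lemma mul_of_diag {t : SL F} (ht : t ∈ (Aset : Finset (SL F))) (c₁₁ c₁₂ c₂₁ c₂₂ : Bool) :
    suppClass ℤ F c₁₁ c₁₂ c₂₁ c₂₂ * of ℤ (SL F) t = suppClass ℤ F c₁₁ c₁₂ c₂₁ c₂₂ := by
  obtain ⟨h1, h2, h3, h4⟩ := Aset_spec ht
  refine suppClass_mul_of _ _ _ _ _ _ _ _ _ (fun g => ?_)
  unfold Cond
  simp only [entry_mul, h2, h3, zero_mul, mul_zero, add_zero, zero_add, mul_ne_zero_iff,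
    and_iff_right h1, and_iff_right h4, and_iff_left h1, and_iff_left h4]

lemma elA_eq : elA ℤ F = ∑ t ∈ (Aset : Finset (SL F)), of ℤ (SL F) t := by
  rw [elA, suppClass_eq]; rfl

lemma elA_mul (c₁₁ c₁₂ c₂₁ c₂₂ : Bool) :
    elA ℤ F * suppClass ℤ F c₁₁ c₁₂ c₂₁ c₂₂
      = (Aset : Finset (SL F)).card • suppClass ℤ F c₁₁ c₁₂ c₂₁ c₂₂ := by
  rw [elA_eq, Finset.sum_mul]
  rw [Finset.sum_congr rfl (fun t ht => of_diag_mul ht c₁₁ c₁₂ c₂₁ c₂₂), Finset.sum_const]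

lemma mul_elA (c₁₁ c₁₂ c₂₁ c₂₂ : Bool) :
    suppClass ℤ F c₁₁ c₁₂ c₂₁ c₂₂ * elA ℤ F
      = (Aset : Finset (SL F)).card • suppClass ℤ F c₁₁ c₁₂ c₂₁ c₂₂ := by
  rw [elA_eq, Finset.mul_sum]
  rw [Finset.sum_congr rfl (fun t ht => mul_of_diag ht c₁₁ c₁₂ c₂₁ c₂₂), Finset.sum_const]

end SCP
namespace SCP
variable {F : Type*} [Field F] [Fintype F] [DecidableEq F]

/-- sum of all elements of the group -/
noncomputable def sigG (F : Type*) [Field F] [Fintype F] [DecidableEq F] :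
    MonoidAlgebra ℤ (SL F) := ∑ g : SL F, of ℤ (SL F) g

lemma of_mul_sigG (x : SL F) : of ℤ (SL F) x * sigG F = sigG F := by
  unfold sigG
  rw [Finset.mul_sum]
  exact Fintype.sum_bijective (fun g => x * g) (Group.mulLeft_bijective x) _ _
    (fun g => (map_mul (of ℤ (SL F)) x g).symm)

lemma sigG_mul_of (x : SL F) : sigG F * of ℤ (SL F) x = sigG F := by
  unfold sigG
  rw [Finset.sum_mul]
  exact Fintype.sum_bijective (fun g => g * x) (Group.mulRight_bijective x) _ _
    (fun g => (map_mul (of ℤ (SL F)) g x).symm)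

lemma suppClass_mul_sigG (c₁₁ c₁₂ c₂₁ c₂₂ : Bool) :
    suppClass ℤ F c₁₁ c₁₂ c₂₁ c₂₂ * sigG F
      = (univ.filter (Cond (F := F) c₁₁ c₁₂ c₂₁ c₂₂)).card • sigG F := by
  rw [suppClass_eq, Finset.sum_mul,
    Finset.sum_congr rfl (fun t _ => of_mul_sigG t), Finset.sum_const]

lemma sigG_mul_suppClass (c₁₁ c₁₂ c₂₁ c₂₂ : Bool) :
    sigG F * suppClass ℤ F c₁₁ c₁₂ c₂₁ c₂₂
      = (univ.filter (Cond (F := F) c₁₁ c₁₂ c₂₁ c₂₂)).card • sigG F := by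
  rw [suppClass_eq, Finset.mul_sum,
    Finset.sum_congr rfl (fun t _ => sigG_mul_of t), Finset.sum_const]

end SCP
namespace SCP
variable {F : Type*} [Field F] [Fintype F] [DecidableEq F]

lemma pointwise_partition (g : SL F) :
    (if Cond true false false true g then of ℤ (SL F) g else 0)
    + (if Cond false true true false g then of ℤ (SL F) g else 0)
    + (if Cond true true true true g then of ℤ (SL F) g else 0)
    + (if Cond true true false true g then of ℤ (SL F) g else 0)
    + (if Cond true false true true g then of ℤ (SL F) g else 0)
    + (if Cond true true true false g then of ℤ (SL F) g else 0)
    + (if Cond false true true true g then of ℤ (SL F) g else 0)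
    = of ℤ (SL F) g := by
  have hdet := det_rel g
  by_cases h1 : (g : Matrix (Fin 2) (Fin 2) F) 0 0 = 0 <;>
  by_cases h2 : (g : Matrix (Fin 2) (Fin 2) F) 0 1 = 0 <;>
  by_cases h3 : (g : Matrix (Fin 2) (Fin 2) F) 1 0 = 0 <;>
  by_cases h4 : (g : Matrix (Fin 2) (Fin 2) F) 1 1 = 0 <;>
  simp_all [Cond]

lemma sigG_eq : sigG F = elA ℤ F + elB ℤ F + elC ℤ F + elDp ℤ F + elDm ℤ F
    + elEp ℤ F + elEm ℤ F := by
  rw [elA, elB, elC, elDp, elDm, elEp, elEm]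
  rw [suppClass_eq, suppClass_eq, suppClass_eq, suppClass_eq, suppClass_eq, suppClass_eq,
    suppClass_eq]
  simp only [Finset.sum_filter]
  rw [← Finset.sum_add_distrib, ← Finset.sum_add_distrib, ← Finset.sum_add_distrib,
    ← Finset.sum_add_distrib, ← Finset.sum_add_distrib, ← Finset.sum_add_distrib]
  unfold sigG
  exact Finset.sum_congr rfl (fun g _ => (pointwise_partition g).symm)

end SCP
namespace SCP
variable {F : Type*} [Field F] [Fintype F] [DecidableEq F]

/-- the upper-triangular Borel -/
def Pfin (F : Type*) [Field F] [Fintype F] [DecidableEq F] : Finset (SL F) :=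
  univ.filter (fun g => (g : Matrix (Fin 2) (Fin 2) F) 1 0 = 0)

/-- the lower-triangular Borel -/
def Lfin (F : Type*) [Field F] [Fintype F] [DecidableEq F] : Finset (SL F) :=
  univ.filter (fun g => (g : Matrix (Fin 2) (Fin 2) F) 0 1 = 0)

/-- matrices with nonzero bottom-right entry -/
def Zfin (F : Type*) [Field F] [Fintype F] [DecidableEq F] : Finset (SL F) :=
  univ.filter (fun g => (g : Matrix (Fin 2) (Fin 2) F) 1 1 ≠ 0)

noncomputable def elP (F : Type*) [Field F] [Fintype F] [DecidableEq F] :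
    MonoidAlgebra ℤ (SL F) := ∑ g ∈ Pfin F, of ℤ (SL F) g
noncomputable def elL (F : Type*) [Field F] [Fintype F] [DecidableEq F] :
    MonoidAlgebra ℤ (SL F) := ∑ g ∈ Lfin F, of ℤ (SL F) g
noncomputable def elZ (F : Type*) [Field F] [Fintype F] [DecidableEq F] :
    MonoidAlgebra ℤ (SL F) := ∑ g ∈ Zfin F, of ℤ (SL F) g

lemma elP_eq : elP F = elA ℤ F + elDp ℤ F := by
  rw [elA, elDp, suppClass_eq, suppClass_eq, elP, Pfin]
  simp only [Finset.sum_filter, ← Finset.sum_add_distrib]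
  refine Finset.sum_congr rfl (fun g _ => ?_)
  have hdet := det_rel g
  by_cases h1 : (g : Matrix (Fin 2) (Fin 2) F) 0 0 = 0 <;>
  by_cases h2 : (g : Matrix (Fin 2) (Fin 2) F) 0 1 = 0 <;>
  by_cases h3 : (g : Matrix (Fin 2) (Fin 2) F) 1 0 = 0 <;>
  by_cases h4 : (g : Matrix (Fin 2) (Fin 2) F) 1 1 = 0 <;>
  simp_all [Cond]

lemma elL_eq : elL F = elA ℤ F + elDm ℤ F := by
  rw [elA, elDm, suppClass_eq, suppClass_eq, elL, Lfin]
  simp only [Finset.sum_filter, ← Finset.sum_add_distrib]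
  refine Finset.sum_congr rfl (fun g _ => ?_)
  have hdet := det_rel g
  by_cases h1 : (g : Matrix (Fin 2) (Fin 2) F) 0 0 = 0 <;>
  by_cases h2 : (g : Matrix (Fin 2) (Fin 2) F) 0 1 = 0 <;>
  by_cases h3 : (g : Matrix (Fin 2) (Fin 2) F) 1 0 = 0 <;>
  by_cases h4 : (g : Matrix (Fin 2) (Fin 2) F) 1 1 = 0 <;>
  simp_all [Cond]

lemma elZ_eq : elZ F = elA ℤ F + elC ℤ F + elDp ℤ F + elDm ℤ F + elEm ℤ F := by
  rw [elA, elC, elDp, elDm, elEm, suppClass_eq, suppClass_eq, suppClass_eq, suppClass_eq,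
    suppClass_eq, elZ, Zfin]
  simp only [Finset.sum_filter, ← Finset.sum_add_distrib]
  refine Finset.sum_congr rfl (fun g _ => ?_)
  have hdet := det_rel g
  by_cases h1 : (g : Matrix (Fin 2) (Fin 2) F) 0 0 = 0 <;>
  by_cases h2 : (g : Matrix (Fin 2) (Fin 2) F) 0 1 = 0 <;>
  by_cases h3 : (g : Matrix (Fin 2) (Fin 2) F) 1 0 = 0 <;>
  by_cases h4 : (g : Matrix (Fin 2) (Fin 2) F) 1 1 = 0 <;>
  simp_all [Cond]

end SCP
namespace SCP
variable {F : Type*} [Field F] [Fintype F] [DecidableEq F]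

lemma mem_Pfin {g : SL F} : g ∈ Pfin F ↔ (g : Matrix (Fin 2) (Fin 2) F) 1 0 = 0 := by
  rw [Pfin, mem_filter]; simp

lemma mem_Lfin {g : SL F} : g ∈ Lfin F ↔ (g : Matrix (Fin 2) (Fin 2) F) 0 1 = 0 := by
  rw [Lfin, mem_filter]; simp

lemma mem_Zfin {g : SL F} : g ∈ Zfin F ↔ (g : Matrix (Fin 2) (Fin 2) F) 1 1 ≠ 0 := by
  rw [Zfin, mem_filter]; simp

lemma Pfin_d_ne {u : SL F} (hu : u ∈ Pfin F) : (u : Matrix (Fin 2) (Fin 2) F) 1 1 ≠ 0 := by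
  have hdet := det_rel u
  rw [mem_Pfin] at hu
  rw [hu] at hdet
  intro h; rw [h] at hdet; simp at hdet

lemma Pfin_a_ne {u : SL F} (hu : u ∈ Pfin F) : (u : Matrix (Fin 2) (Fin 2) F) 0 0 ≠ 0 := by
  have hdet := det_rel u
  rw [mem_Pfin] at hu
  rw [hu] at hdet
  intro h; rw [h] at hdet; simp at hdet

lemma Lfin_d_ne {u : SL F} (hu : u ∈ Lfin F) : (u : Matrix (Fin 2) (Fin 2) F) 1 1 ≠ 0 := by
  have hdet := det_rel u
  rw [mem_Lfin] at hu
  rw [hu] at hdet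
  intro h; rw [h] at hdet; simp at hdet

lemma of_mul_elP {u : SL F} (hu : u ∈ Pfin F) : of ℤ (SL F) u * elP F = elP F := by
  rw [elP, Finset.mul_sum]
  refine Finset.sum_bij' (fun g _ => u * g) (fun h _ => u⁻¹ * h) ?_ ?_ ?_ ?_ ?_
  · intro a ha
    rw [mem_Pfin] at *
    rw [entry_mul, hu, ha]
    ring
  · intro a ha
    rw [mem_Pfin] at *
    have he : u * (u⁻¹ * a) = a := by group
    have := entry_mul u (u⁻¹ * a) 1 0
    rw [he, ha, hu, zero_mul, zero_add] at this
    exact (mul_eq_zero.mp this.symm).resolve_left (Pfin_d_ne (mem_Pfin.mpr hu))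
  · intro a _; simp only [inv_mul_cancel_left]
  · intro a _; simp only [mul_inv_cancel_left]
  · intro a _; rw [← map_mul]

lemma elP_mul_elP : elP F * elP F = (Pfin F).card • elP F := by
  nth_rewrite 1 [elP]
  rw [Finset.sum_mul, Finset.sum_congr rfl (fun u hu => of_mul_elP hu), Finset.sum_const]

end SCP
namespace SCP
variable {F : Type*} [Field F] [Fintype F] [DecidableEq F]

/-- upper factor in the LU decomposition -/
def Uel (a : F) (ha : a ≠ 0) (g : SL F) : SL F :=
  ⟨!![a, (g : Matrix (Fin 2) (Fin 2) F) 0 1 * (a * (g : Matrix (Fin 2) (Fin 2) F) 1 1)⁻¹;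
      0, a⁻¹], by
    simp [Matrix.det_fin_two, mul_inv_cancel₀ ha]⟩

/-- lower factor in the LU decomposition -/
def Vel (a : F) (ha : a ≠ 0) (g : SL F)
    (hg : (g : Matrix (Fin 2) (Fin 2) F) 1 1 ≠ 0) : SL F :=
  ⟨!![(a * (g : Matrix (Fin 2) (Fin 2) F) 1 1)⁻¹, 0;
      a * (g : Matrix (Fin 2) (Fin 2) F) 1 0, a * (g : Matrix (Fin 2) (Fin 2) F) 1 1], by
    simp only [Matrix.det_fin_two]
    simp
    field_simp⟩

lemma Uel_mem_Pfin (a : F) (ha : a ≠ 0) (g : SL F) : Uel a ha g ∈ Pfin F := by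
  rw [mem_Pfin]; simp [Uel]

lemma Vel_mem_Lfin (a : F) (ha : a ≠ 0) (g : SL F)
    (hg : (g : Matrix (Fin 2) (Fin 2) F) 1 1 ≠ 0) : Vel a ha g hg ∈ Lfin F := by
  rw [mem_Lfin]; simp [Vel]

lemma Uel_mul_Vel (a : F) (ha : a ≠ 0) (g : SL F)
    (hg : (g : Matrix (Fin 2) (Fin 2) F) 1 1 ≠ 0) :
    Uel a ha g * Vel a ha g hg = g := by
  have hdet := det_rel g
  apply Subtype.ext
  rw [Matrix.SpecialLinearGroup.coe_mul]
  ext i j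
  fin_cases i <;> fin_cases j <;>
    simp only [Uel, Vel, Matrix.mul_apply, Fin.sum_univ_two, Matrix.cons_val_zero,
      Matrix.cons_val_one, Matrix.head_cons, Matrix.head_fin_const, Matrix.cons_val',
      Matrix.cons_val_fin_one, Matrix.empty_val', Fin.isValue, Fin.zero_eta, Fin.mk_one,
      Matrix.of_apply]
  · field_simp
    linear_combination (-1 : F) * hdet
  · field_simp; ring
  · field_simp; ring
  · field_simp; ring

lemma image_PL :
    (Pfin F ×ˢ Lfin F).image (fun p : SL F × SL F => p.1 * p.2) = Zfin F := by
  ext g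
  constructor
  · intro hgm
    obtain ⟨p, hp, rfl⟩ := Finset.mem_image.mp hgm
    rw [Finset.mem_product] at hp
    rw [mem_Zfin, entry_mul, mem_Pfin.mp hp.1, zero_mul, zero_add]
    exact mul_ne_zero (Pfin_d_ne hp.1) (Lfin_d_ne hp.2)
  · intro hg
    rw [mem_Zfin] at hg
    exact Finset.mem_image.mpr ⟨(Uel 1 one_ne_zero g, Vel 1 one_ne_zero g hg),
      Finset.mem_product.mpr ⟨Uel_mem_Pfin 1 one_ne_zero g, Vel_mem_Lfin 1 one_ne_zero g hg⟩,
      Uel_mul_Vel 1 one_ne_zero g hg⟩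

lemma fiber_card {g : SL F} (hg : g ∈ Zfin F) :
    ((Pfin F ×ˢ Lfin F).filter (fun p : SL F × SL F => p.1 * p.2 = g)).card
      = Fintype.card F - 1 := by
  rw [mem_Zfin] at hg
  have hcard : ((univ : Finset F).erase 0).card = Fintype.card F - 1 := by
    rw [Finset.card_erase_of_mem (mem_univ 0), Finset.card_univ]
  rw [← hcard]
  refine Finset.card_bij' (fun p _ => (p.1 : Matrix (Fin 2) (Fin 2) F) 0 0)
    (fun a ha => (Uel a (Finset.ne_of_mem_erase ha) g,
      Vel a (Finset.ne_of_mem_erase ha) g hg)) ?_ ?_ ?_ ?_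
  · intro p hp
    rw [Finset.mem_filter, Finset.mem_product] at hp
    exact Finset.mem_erase.mpr ⟨Pfin_a_ne hp.1.1, mem_univ _⟩
  · intro a ha
    rw [Finset.mem_filter, Finset.mem_product]
    exact ⟨⟨Uel_mem_Pfin a (Finset.ne_of_mem_erase ha) g,
      Vel_mem_Lfin a (Finset.ne_of_mem_erase ha) g hg⟩,
      Uel_mul_Vel a (Finset.ne_of_mem_erase ha) g hg⟩
  · -- j (i p) = p
    intro p hp
    rw [Finset.mem_filter, Finset.mem_product] at hp
    obtain ⟨⟨hp1, hp2⟩, hpe⟩ := hp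
    set a := (p.1 : Matrix (Fin 2) (Fin 2) F) 0 0 with ha_def
    have ha : a ≠ 0 := Pfin_a_ne hp1
    have h10 : (p.1 : Matrix (Fin 2) (Fin 2) F) 1 0 = 0 := mem_Pfin.mp hp1
    have h01 : (p.2 : Matrix (Fin 2) (Fin 2) F) 0 1 = 0 := mem_Lfin.mp hp2
    have hd1 := det_rel p.1
    have hd2 := det_rel p.2
    have E : ∀ i j : Fin 2,
        (p.1 : Matrix (Fin 2) (Fin 2) F) i 0 * (p.2 : Matrix (Fin 2) (Fin 2) F) 0 j
        + (p.1 : Matrix (Fin 2) (Fin 2) F) i 1 * (p.2 : Matrix (Fin 2) (Fin 2) F) 1 j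
        = (g : Matrix (Fin 2) (Fin 2) F) i j := by
      intro i j; rw [← entry_mul, hpe]
    -- p.1 1 1 = a⁻¹
    have hu11 : (p.1 : Matrix (Fin 2) (Fin 2) F) 1 1 = a⁻¹ := by
      rw [h10] at hd1
      field_simp
      linear_combination hd1
    -- p.2 1 1 = a * g11
    have hv11 : (p.2 : Matrix (Fin 2) (Fin 2) F) 1 1 = a * (g : Matrix (Fin 2) (Fin 2) F) 1 1 := by
      have := E 1 1
      rw [h10, hu11, zero_mul, zero_add] at this
      field_simp at this
      linear_combination this
    -- p.2 1 0 = a * g10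
    have hv10 : (p.2 : Matrix (Fin 2) (Fin 2) F) 1 0 = a * (g : Matrix (Fin 2) (Fin 2) F) 1 0 := by
      have := E 1 0
      rw [h10, hu11, zero_mul, zero_add] at this
      field_simp at this
      linear_combination this
    -- p.2 0 0 = (a * g11)⁻¹
    have hv00 : (p.2 : Matrix (Fin 2) (Fin 2) F) 0 0
        = (a * (g : Matrix (Fin 2) (Fin 2) F) 1 1)⁻¹ := by
      rw [h01, hv11] at hd2
      field_simp
      linear_combination hd2
    -- p.1 0 1 = g01 * (a * g11)⁻¹
    have hu01 : (p.1 : Matrix (Fin 2) (Fin 2) F) 0 1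
        = (g : Matrix (Fin 2) (Fin 2) F) 0 1 * (a * (g : Matrix (Fin 2) (Fin 2) F) 1 1)⁻¹ := by
      have := E 0 1
      rw [h01, hv11, mul_zero, zero_add] at this
      field_simp
      linear_combination this
    refine Prod.ext ?_ ?_ <;> apply Subtype.ext
    · show _ = ((p.1 : Matrix (Fin 2) (Fin 2) F))
      ext i j; fin_cases i <;> fin_cases j <;> simp [Uel, hu11, hu01, h10, ← ha_def]
    · show _ = ((p.2 : Matrix (Fin 2) (Fin 2) F))
      ext i j; fin_cases i <;> fin_cases j <;> simp [Vel, hv00, hv10, hv11, h01, ← ha_def]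
  · intro a ha
    rfl

lemma elP_mul_elL : elP F * elL F = (Fintype.card F - 1) • elZ F := by
  rw [elP, elL, Finset.sum_mul_sum]
  have h1 : ∀ u ∈ Pfin F, ∀ v ∈ Lfin F,
      of ℤ (SL F) u * of ℤ (SL F) v = of ℤ (SL F) (u * v) :=
    fun u _ v _ => (map_mul _ _ _).symm
  rw [Finset.sum_congr rfl (fun u hu => Finset.sum_congr rfl (fun v hv => h1 u hu v hv))]
  rw [← Finset.sum_product']
  rw [Finset.sum_comp (of ℤ (SL F)) (fun p : SL F × SL F => p.1 * p.2)]
  rw [image_PL]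
  rw [Finset.sum_congr rfl (fun g hgm => by rw [fiber_card hgm])]
  rw [elZ, Finset.smul_sum]

end SCP
namespace SCP
variable {F : Type*} [Field F] [Fintype F] [DecidableEq F]

/-- the span of the seven support classes -/
noncomputable def S (F : Type*) [Field F] [Fintype F] [DecidableEq F] :
    Submodule ℤ (MonoidAlgebra ℤ (SL F)) :=
  Submodule.span ℤ ({elA ℤ F, elB ℤ F, elC ℤ F, elDp ℤ F, elDm ℤ F, elEp ℤ F, elEm ℤ F} :
    Set (MonoidAlgebra ℤ (SL F)))

lemma hA : elA ℤ F ∈ S F := Submodule.subset_span (by simp [S])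
lemma hB : elB ℤ F ∈ S F := Submodule.subset_span (by simp [S])
lemma hC : elC ℤ F ∈ S F := Submodule.subset_span (by simp [S])
lemma hDp : elDp ℤ F ∈ S F := Submodule.subset_span (by simp [S])
lemma hDm : elDm ℤ F ∈ S F := Submodule.subset_span (by simp [S])
lemma hEp : elEp ℤ F ∈ S F := Submodule.subset_span (by simp [S])
lemma hEm : elEm ℤ F ∈ S F := Submodule.subset_span (by simp [S])

lemma hSig : sigG F ∈ S F := by
  rw [sigG_eq]
  exact add_mem (add_mem (add_mem (add_mem (add_mem (add_mem hA hB) hC) hDp) hDm) hEp) hEm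

lemma hZ : elZ F ∈ S F := by
  rw [elZ_eq]
  exact add_mem (add_mem (add_mem (add_mem hA hC) hDp) hDm) hEm

lemma hPel : elP F ∈ S F := by rw [elP_eq]; exact add_mem hA hDp

-- the w-action equations on the generators
lemma wA : of ℤ (SL F) w * elA ℤ F = elB ℤ F := of_w_mul true false false true
lemma wB : of ℤ (SL F) w * elB ℤ F = elA ℤ F := of_w_mul false true true false
lemma wC : of ℤ (SL F) w * elC ℤ F = elC ℤ F := of_w_mul true true true true
lemma wDp : of ℤ (SL F) w * elDp ℤ F = elEm ℤ F := of_w_mul true true false true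
lemma wDm : of ℤ (SL F) w * elDm ℤ F = elEp ℤ F := of_w_mul true false true true
lemma wEp : of ℤ (SL F) w * elEp ℤ F = elDm ℤ F := of_w_mul true true true false
lemma wEm : of ℤ (SL F) w * elEm ℤ F = elDp ℤ F := of_w_mul false true true true

lemma Aw : elA ℤ F * of ℤ (SL F) w = elB ℤ F := mul_of_w true false false true
lemma Bw : elB ℤ F * of ℤ (SL F) w = elA ℤ F := mul_of_w false true true false
lemma Cw : elC ℤ F * of ℤ (SL F) w = elC ℤ F := mul_of_w true true true true
lemma Dpw : elDp ℤ F * of ℤ (SL F) w = elEp ℤ F := mul_of_w true true false true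
lemma Dmw : elDm ℤ F * of ℤ (SL F) w = elEm ℤ F := mul_of_w true false true true
lemma Epw : elEp ℤ F * of ℤ (SL F) w = elDp ℤ F := mul_of_w true true true false
lemma Emw : elEm ℤ F * of ℤ (SL F) w = elDm ℤ F := mul_of_w false true true true

lemma Aw' : elA ℤ F * of ℤ (SL F) w' = elB ℤ F := mul_of_w' true false false true
lemma Bw' : elB ℤ F * of ℤ (SL F) w' = elA ℤ F := mul_of_w' false true true false
lemma Cw' : elC ℤ F * of ℤ (SL F) w' = elC ℤ F := mul_of_w' true true true true
lemma Dpw' : elDp ℤ F * of ℤ (SL F) w' = elEp ℤ F := mul_of_w' true true false true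
lemma Dmw' : elDm ℤ F * of ℤ (SL F) w' = elEm ℤ F := mul_of_w' true false true true
lemma Epw' : elEp ℤ F * of ℤ (SL F) w' = elDp ℤ F := mul_of_w' true true true false
lemma Emw' : elEm ℤ F * of ℤ (SL F) w' = elDm ℤ F := mul_of_w' false true true true

lemma mem_gens_rcases {x : MonoidAlgebra ℤ (SL F)}
    (hx : x ∈ ({elA ℤ F, elB ℤ F, elC ℤ F, elDp ℤ F, elDm ℤ F, elEp ℤ F, elEm ℤ F} :
      Set (MonoidAlgebra ℤ (SL F)))) :
    x = elA ℤ F ∨ x = elB ℤ F ∨ x = elC ℤ F ∨ x = elDp ℤ F ∨ x = elDm ℤ F ∨ x = elEp ℤ F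
      ∨ x = elEm ℤ F := by
  simpa [Set.mem_insert_iff, Set.mem_singleton_iff] using hx

/-- left multiplication by `of w` preserves the span -/
lemma S_Lw {z : MonoidAlgebra ℤ (SL F)} (hz : z ∈ S F) : of ℤ (SL F) w * z ∈ S F := by
  induction hz using Submodule.span_induction with
  | mem x hx =>
    rcases mem_gens_rcases hx with rfl|rfl|rfl|rfl|rfl|rfl|rfl
    · rw [wA]; exact hB
    · rw [wB]; exact hA
    · rw [wC]; exact hC
    · rw [wDp]; exact hEm
    · rw [wDm]; exact hEp
    · rw [wEp]; exact hDm
    · rw [wEm]; exact hDp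
  | zero => rw [mul_zero]; exact zero_mem _
  | add x y _ _ ihx ihy => rw [mul_add]; exact add_mem ihx ihy
  | smul a x _ ih => rw [mul_smul_comm]; exact Submodule.smul_mem _ _ ih

/-- right multiplication by `of w` preserves the span -/
lemma S_Rw {z : MonoidAlgebra ℤ (SL F)} (hz : z ∈ S F) : z * of ℤ (SL F) w ∈ S F := by
  induction hz using Submodule.span_induction with
  | mem x hx =>
    rcases mem_gens_rcases hx with rfl|rfl|rfl|rfl|rfl|rfl|rfl
    · rw [Aw]; exact hB
    · rw [Bw]; exact hA
    · rw [Cw]; exact hC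
    · rw [Dpw]; exact hEp
    · rw [Dmw]; exact hEm
    · rw [Epw]; exact hDp
    · rw [Emw]; exact hDm
  | zero => rw [zero_mul]; exact zero_mem _
  | add x y _ _ ihx ihy => rw [add_mul]; exact add_mem ihx ihy
  | smul a x _ ih => rw [smul_mul_assoc]; exact Submodule.smul_mem _ _ ih

/-- right multiplication by `of w'` preserves the span -/
lemma S_Rw' {z : MonoidAlgebra ℤ (SL F)} (hz : z ∈ S F) : z * of ℤ (SL F) w' ∈ S F := by
  induction hz using Submodule.span_induction with
  | mem x hx =>
    rcases mem_gens_rcases hx with rfl|rfl|rfl|rfl|rfl|rfl|rfl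
    · rw [Aw']; exact hB
    · rw [Bw']; exact hA
    · rw [Cw']; exact hC
    · rw [Dpw']; exact hEp
    · rw [Dmw']; exact hEm
    · rw [Epw']; exact hDp
    · rw [Emw']; exact hDm
  | zero => rw [zero_mul]; exact zero_mem _
  | add x y _ _ ihx ihy => rw [add_mul]; exact add_mem ihx ihy
  | smul a x _ ih => rw [smul_mul_assoc]; exact Submodule.smul_mem _ _ ih

end SCP
namespace SCP
variable {F : Type*} [Field F] [Fintype F] [DecidableEq F]

-- multiplication by elA on generators
lemma AmA : elA ℤ F * elA ℤ F = (Aset (F := F)).card • elA ℤ F := elA_mul true false false true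
lemma AmB : elA ℤ F * elB ℤ F = (Aset (F := F)).card • elB ℤ F := elA_mul false true true false
lemma AmC : elA ℤ F * elC ℤ F = (Aset (F := F)).card • elC ℤ F := elA_mul true true true true
lemma AmDp : elA ℤ F * elDp ℤ F = (Aset (F := F)).card • elDp ℤ F := elA_mul true true false true
lemma AmDm : elA ℤ F * elDm ℤ F = (Aset (F := F)).card • elDm ℤ F := elA_mul true false true true
lemma AmEp : elA ℤ F * elEp ℤ F = (Aset (F := F)).card • elEp ℤ F := elA_mul true true true false
lemma AmEm : elA ℤ F * elEm ℤ F = (Aset (F := F)).card • elEm ℤ F := elA_mul false true true true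

lemma mAA : elA ℤ F * elA ℤ F = (Aset (F := F)).card • elA ℤ F := AmA
lemma BmA : elB ℤ F * elA ℤ F = (Aset (F := F)).card • elB ℤ F := mul_elA false true true false
lemma CmA : elC ℤ F * elA ℤ F = (Aset (F := F)).card • elC ℤ F := mul_elA true true true true
lemma DpmA : elDp ℤ F * elA ℤ F = (Aset (F := F)).card • elDp ℤ F := mul_elA true true false true
lemma DmmA : elDm ℤ F * elA ℤ F = (Aset (F := F)).card • elDm ℤ F := mul_elA true false true true
lemma EpmA : elEp ℤ F * elA ℤ F = (Aset (F := F)).card • elEp ℤ F := mul_elA true true true false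
lemma EmmA : elEm ℤ F * elA ℤ F = (Aset (F := F)).card • elEm ℤ F := mul_elA false true true true

-- multiplication by sigG on generators
lemma AmSig : elA ℤ F * sigG F = (univ.filter (Cond (F := F) true false false true)).card • sigG F :=
  suppClass_mul_sigG true false false true
lemma BmSig : elB ℤ F * sigG F = (univ.filter (Cond (F := F) false true true false)).card • sigG F :=
  suppClass_mul_sigG false true true false
lemma CmSig : elC ℤ F * sigG F = (univ.filter (Cond (F := F) true true true true)).card • sigG F :=
  suppClass_mul_sigG true true true true
lemma DpmSig : elDp ℤ F * sigG F = (univ.filter (Cond (F := F) true true false true)).card • sigG F :=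
  suppClass_mul_sigG true true false true
lemma DmmSig : elDm ℤ F * sigG F = (univ.filter (Cond (F := F) true false true true)).card • sigG F :=
  suppClass_mul_sigG true false true true
lemma EpmSig : elEp ℤ F * sigG F = (univ.filter (Cond (F := F) true true true false)).card • sigG F :=
  suppClass_mul_sigG true true true false
lemma EmmSig : elEm ℤ F * sigG F = (univ.filter (Cond (F := F) false true true true)).card • sigG F :=
  suppClass_mul_sigG false true true true

lemma SigmA : sigG F * elA ℤ F = (univ.filter (Cond (F := F) true false false true)).card • sigG F :=
  sigG_mul_suppClass true false false true
lemma SigmB : sigG F * elB ℤ F = (univ.filter (Cond (F := F) false true true false)).card • sigG F :=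
  sigG_mul_suppClass false true true false
lemma SigmC : sigG F * elC ℤ F = (univ.filter (Cond (F := F) true true true true)).card • sigG F :=
  sigG_mul_suppClass true true true true
lemma SigmDp : sigG F * elDp ℤ F = (univ.filter (Cond (F := F) true true false true)).card • sigG F :=
  sigG_mul_suppClass true true false true
lemma SigmDm : sigG F * elDm ℤ F = (univ.filter (Cond (F := F) true false true true)).card • sigG F :=
  sigG_mul_suppClass true false true true
lemma SigmEp : sigG F * elEp ℤ F = (univ.filter (Cond (F := F) true true true false)).card • sigG F :=
  sigG_mul_suppClass true true true false
lemma SigmEm : sigG F * elEm ℤ F = (univ.filter (Cond (F := F) false true true true)).card • sigG F :=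
  sigG_mul_suppClass false true true true

end SCP
namespace SCP
variable {F : Type*} [Field F] [Fintype F] [DecidableEq F]

lemma hww' : of ℤ (SL F) w * of ℤ (SL F) w' = 1 := by
  rw [← map_mul, w_mul_w', map_one]

/-- `D₊ · D₊ ∈ S` -/
lemma pDpDp : elDp ℤ F * elDp ℤ F ∈ S F := by
  have h := elP_mul_elP (F := F)
  rw [elP_eq, add_mul, mul_add, mul_add] at h
  have h2 : elDp ℤ F * elDp ℤ F
      = (Pfin F).card • (elA ℤ F + elDp ℤ F)
        - (elA ℤ F * elA ℤ F + elA ℤ F * elDp ℤ F + elDp ℤ F * elA ℤ F) := by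
    rw [← h]; abel
  rw [h2, AmA, AmDp, DpmA]
  refine sub_mem (Submodule.smul_mem _ _ (add_mem hA hDp)) ?_
  exact add_mem (add_mem (Submodule.smul_mem _ _ hA) (Submodule.smul_mem _ _ hDp))
    (Submodule.smul_mem _ _ hDp)

/-- `D₊ · D₋ ∈ S` -/
lemma pDpDm : elDp ℤ F * elDm ℤ F ∈ S F := by
  have h := elP_mul_elL (F := F)
  rw [elP_eq, elL_eq, add_mul, mul_add, mul_add] at h
  have h2 : elDp ℤ F * elDm ℤ F
      = (Fintype.card F - 1) • elZ F
        - (elA ℤ F * elA ℤ F + elA ℤ F * elDm ℤ F + elDp ℤ F * elA ℤ F) := by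
    rw [← h]; abel
  rw [h2, AmA, AmDm, DpmA]
  refine sub_mem (Submodule.smul_mem _ _ hZ) ?_
  exact add_mem (add_mem (Submodule.smul_mem _ _ hA) (Submodule.smul_mem _ _ hDm))
    (Submodule.smul_mem _ _ hDp)

/-- `D₊ · w · D₊ ∈ S` -/
lemma pG2 : elDp ℤ F * of ℤ (SL F) w * elDp ℤ F ∈ S F := by
  have key : elDp ℤ F * elDm ℤ F * of ℤ (SL F) w' = elDp ℤ F * of ℤ (SL F) w * elDp ℤ F := by
    have hDm : elDm ℤ F = of ℤ (SL F) w * (elDp ℤ F * of ℤ (SL F) w) := by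
      rw [Dpw, wEp]
    rw [hDm]
    simp only [mul_assoc]
    rw [hww', mul_one]
  rw [← key]
  exact S_Rw' pDpDm

-- the sixteen core products
lemma pDpEp : elDp ℤ F * elEp ℤ F ∈ S F := by
  rw [← Dpw, ← mul_assoc]; exact S_Rw pDpDp
lemma pDpEm : elDp ℤ F * elEm ℤ F ∈ S F := by
  rw [← wDp, ← mul_assoc]; exact pG2
lemma pEpDp : elEp ℤ F * elDp ℤ F ∈ S F := by
  rw [← Dpw]; exact pG2
lemma pEpDm : elEp ℤ F * elDm ℤ F ∈ S F := by
  rw [← Dpw, mul_assoc, wDm]; exact pDpEp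
lemma pEpEp : elEp ℤ F * elEp ℤ F ∈ S F := by
  nth_rewrite 1 [← Dpw]
  rw [mul_assoc, wEp]; exact pDpDm
lemma pEpEm : elEp ℤ F * elEm ℤ F ∈ S F := by
  rw [← Dpw, mul_assoc, wEm]; exact pDpDp
lemma pDmDp : elDm ℤ F * elDp ℤ F ∈ S F := by
  rw [← wEp, mul_assoc]; exact S_Lw pEpDp
lemma pDmDm : elDm ℤ F * elDm ℤ F ∈ S F := by
  nth_rewrite 1 [← wEp]
  rw [mul_assoc]; exact S_Lw pEpDm
lemma pDmEp : elDm ℤ F * elEp ℤ F ∈ S F := by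
  rw [← wEp, mul_assoc]; exact S_Lw pEpEp
lemma pDmEm : elDm ℤ F * elEm ℤ F ∈ S F := by
  rw [← wEp, mul_assoc]; exact S_Lw pEpEm
lemma pEmDp : elEm ℤ F * elDp ℤ F ∈ S F := by
  rw [← wDp, mul_assoc]; exact S_Lw pDpDp
lemma pEmDm : elEm ℤ F * elDm ℤ F ∈ S F := by
  rw [← wDp, mul_assoc]; exact S_Lw pDpDm
lemma pEmEp : elEm ℤ F * elEp ℤ F ∈ S F := by
  rw [← wDp, mul_assoc]; exact S_Lw pDpEp
lemma pEmEm : elEm ℤ F * elEm ℤ F ∈ S F := by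
  nth_rewrite 1 [← wDp]
  rw [mul_assoc]; exact S_Lw pDpEm

end SCP
namespace SCP
variable {F : Type*} [Field F] [Fintype F] [DecidableEq F]

lemma hCeq : elC ℤ F = sigG F - elA ℤ F - elB ℤ F - elDp ℤ F - elDm ℤ F - elEp ℤ F - elEm ℤ F := by
  rw [sigG_eq]; abel

-- row A
lemma pAA : elA ℤ F * elA ℤ F ∈ S F := by rw [AmA]; exact Submodule.smul_mem _ _ hA
lemma pAB : elA ℤ F * elB ℤ F ∈ S F := by rw [AmB]; exact Submodule.smul_mem _ _ hB
lemma pAC : elA ℤ F * elC ℤ F ∈ S F := by rw [AmC]; exact Submodule.smul_mem _ _ hC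
lemma pADp : elA ℤ F * elDp ℤ F ∈ S F := by rw [AmDp]; exact Submodule.smul_mem _ _ hDp
lemma pADm : elA ℤ F * elDm ℤ F ∈ S F := by rw [AmDm]; exact Submodule.smul_mem _ _ hDm
lemma pAEp : elA ℤ F * elEp ℤ F ∈ S F := by rw [AmEp]; exact Submodule.smul_mem _ _ hEp
lemma pAEm : elA ℤ F * elEm ℤ F ∈ S F := by rw [AmEm]; exact Submodule.smul_mem _ _ hEm

-- column A
lemma pBA : elB ℤ F * elA ℤ F ∈ S F := by rw [BmA]; exact Submodule.smul_mem _ _ hB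
lemma pCA : elC ℤ F * elA ℤ F ∈ S F := by rw [CmA]; exact Submodule.smul_mem _ _ hC
lemma pDpA : elDp ℤ F * elA ℤ F ∈ S F := by rw [DpmA]; exact Submodule.smul_mem _ _ hDp
lemma pDmA : elDm ℤ F * elA ℤ F ∈ S F := by rw [DmmA]; exact Submodule.smul_mem _ _ hDm
lemma pEpA : elEp ℤ F * elA ℤ F ∈ S F := by rw [EpmA]; exact Submodule.smul_mem _ _ hEp
lemma pEmA : elEm ℤ F * elA ℤ F ∈ S F := by rw [EmmA]; exact Submodule.smul_mem _ _ hEm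

-- row B (via B = w ⬝ A)
lemma pBB : elB ℤ F * elB ℤ F ∈ S F := by
  nth_rewrite 1 [← wA]
  rw [mul_assoc, AmB, mul_smul_comm, wB]; exact Submodule.smul_mem _ _ hA
lemma pBC : elB ℤ F * elC ℤ F ∈ S F := by
  rw [← wA, mul_assoc, AmC, mul_smul_comm, wC]; exact Submodule.smul_mem _ _ hC
lemma pBDp : elB ℤ F * elDp ℤ F ∈ S F := by
  rw [← wA, mul_assoc, AmDp, mul_smul_comm, wDp]; exact Submodule.smul_mem _ _ hEm
lemma pBDm : elB ℤ F * elDm ℤ F ∈ S F := by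
  rw [← wA, mul_assoc, AmDm, mul_smul_comm, wDm]; exact Submodule.smul_mem _ _ hEp
lemma pBEp : elB ℤ F * elEp ℤ F ∈ S F := by
  rw [← wA, mul_assoc, AmEp, mul_smul_comm, wEp]; exact Submodule.smul_mem _ _ hDm
lemma pBEm : elB ℤ F * elEm ℤ F ∈ S F := by
  rw [← wA, mul_assoc, AmEm, mul_smul_comm, wEm]; exact Submodule.smul_mem _ _ hDp

-- column B (via B = A ⬝ w)
lemma pCB : elC ℤ F * elB ℤ F ∈ S F := by
  rw [← Aw, ← mul_assoc, CmA, smul_mul_assoc, Cw]; exact Submodule.smul_mem _ _ hC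
lemma pDpB : elDp ℤ F * elB ℤ F ∈ S F := by
  rw [← Aw, ← mul_assoc, DpmA, smul_mul_assoc, Dpw]; exact Submodule.smul_mem _ _ hEp
lemma pDmB : elDm ℤ F * elB ℤ F ∈ S F := by
  rw [← Aw, ← mul_assoc, DmmA, smul_mul_assoc, Dmw]; exact Submodule.smul_mem _ _ hEm
lemma pEpB : elEp ℤ F * elB ℤ F ∈ S F := by
  rw [← Aw, ← mul_assoc, EpmA, smul_mul_assoc, Epw]; exact Submodule.smul_mem _ _ hDp
lemma pEmB : elEm ℤ F * elB ℤ F ∈ S F := by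
  rw [← Aw, ← mul_assoc, EmmA, smul_mul_assoc, Emw]; exact Submodule.smul_mem _ _ hDm

-- column C for the D/E rows
lemma pDpC : elDp ℤ F * elC ℤ F ∈ S F := by
  rw [hCeq]
  simp only [mul_sub]
  refine sub_mem (sub_mem (sub_mem (sub_mem (sub_mem (sub_mem ?_ ?_) ?_) ?_) ?_) ?_) ?_
  · rw [DpmSig]; exact Submodule.smul_mem _ _ hSig
  · exact pDpA
  · exact pDpB
  · exact pDpDp
  · exact pDpDm
  · exact pDpEp
  · exact pDpEm
lemma pDmC : elDm ℤ F * elC ℤ F ∈ S F := by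
  rw [hCeq]
  simp only [mul_sub]
  refine sub_mem (sub_mem (sub_mem (sub_mem (sub_mem (sub_mem ?_ ?_) ?_) ?_) ?_) ?_) ?_
  · rw [DmmSig]; exact Submodule.smul_mem _ _ hSig
  · exact pDmA
  · exact pDmB
  · exact pDmDp
  · exact pDmDm
  · exact pDmEp
  · exact pDmEm
lemma pEpC : elEp ℤ F * elC ℤ F ∈ S F := by
  rw [hCeq]
  simp only [mul_sub]
  refine sub_mem (sub_mem (sub_mem (sub_mem (sub_mem (sub_mem ?_ ?_) ?_) ?_) ?_) ?_) ?_
  · rw [EpmSig]; exact Submodule.smul_mem _ _ hSig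
  · exact pEpA
  · exact pEpB
  · exact pEpDp
  · exact pEpDm
  · exact pEpEp
  · exact pEpEm
lemma pEmC : elEm ℤ F * elC ℤ F ∈ S F := by
  rw [hCeq]
  simp only [mul_sub]
  refine sub_mem (sub_mem (sub_mem (sub_mem (sub_mem (sub_mem ?_ ?_) ?_) ?_) ?_) ?_) ?_
  · rw [EmmSig]; exact Submodule.smul_mem _ _ hSig
  · exact pEmA
  · exact pEmB
  · exact pEmDp
  · exact pEmDm
  · exact pEmEp
  · exact pEmEm

-- row C
lemma pCX {x : MonoidAlgebra ℤ (SL F)}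
    (h1 : sigG F * x ∈ S F) (h2 : elA ℤ F * x ∈ S F) (h3 : elB ℤ F * x ∈ S F)
    (h4 : elDp ℤ F * x ∈ S F) (h5 : elDm ℤ F * x ∈ S F) (h6 : elEp ℤ F * x ∈ S F)
    (h7 : elEm ℤ F * x ∈ S F) : elC ℤ F * x ∈ S F := by
  rw [hCeq]
  simp only [sub_mul]
  exact sub_mem (sub_mem (sub_mem (sub_mem (sub_mem (sub_mem h1 h2) h3) h4) h5) h6) h7

lemma pCC : elC ℤ F * elC ℤ F ∈ S F :=
  pCX (by rw [SigmC]; exact Submodule.smul_mem _ _ hSig) pAC pBC pDpC pDmC pEpC pEmC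
lemma pCDp : elC ℤ F * elDp ℤ F ∈ S F :=
  pCX (by rw [SigmDp]; exact Submodule.smul_mem _ _ hSig) pADp pBDp pDpDp pDmDp pEpDp pEmDp
lemma pCDm : elC ℤ F * elDm ℤ F ∈ S F :=
  pCX (by rw [SigmDm]; exact Submodule.smul_mem _ _ hSig) pADm pBDm pDpDm pDmDm pEpDm pEmDm
lemma pCEp : elC ℤ F * elEp ℤ F ∈ S F :=
  pCX (by rw [SigmEp]; exact Submodule.smul_mem _ _ hSig) pAEp pBEp pDpEp pDmEp pEpEp pEmEp
lemma pCEm : elC ℤ F * elEm ℤ F ∈ S F :=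
  pCX (by rw [SigmEm]; exact Submodule.smul_mem _ _ hSig) pAEm pBEm pDpEm pDmEm pEpEm pEmEm

/-- products of generators lie in the span -/
lemma key {a b : MonoidAlgebra ℤ (SL F)}
    (ha : a ∈ ({elA ℤ F, elB ℤ F, elC ℤ F, elDp ℤ F, elDm ℤ F, elEp ℤ F, elEm ℤ F} :
      Set (MonoidAlgebra ℤ (SL F))))
    (hb : b ∈ ({elA ℤ F, elB ℤ F, elC ℤ F, elDp ℤ F, elDm ℤ F, elEp ℤ F, elEm ℤ F} :
      Set (MonoidAlgebra ℤ (SL F)))) : a * b ∈ S F := by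
  rcases mem_gens_rcases ha with rfl|rfl|rfl|rfl|rfl|rfl|rfl <;>
  rcases mem_gens_rcases hb with rfl|rfl|rfl|rfl|rfl|rfl|rfl
  exacts [pAA, pAB, pAC, pADp, pADm, pAEp, pAEm,
    pBA, pBB, pBC, pBDp, pBDm, pBEp, pBEm,
    pCA, pCB, pCC, pCDp, pCDm, pCEp, pCEm,
    pDpA, pDpB, pDpC, pDpDp, pDpDm, pDpEp, pDpEm,
    pDmA, pDmB, pDmC, pDmDp, pDmDm, pDmEp, pDmEm,
    pEpA, pEpB, pEpC, pEpDp, pEpDm, pEpEp, pEpEm,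
    pEmA, pEmB, pEmC, pEmDp, pEmDm, pEmEp, pEmEm]

end SCP

theorem supportClasses_span_mul_closed (F : Type*) [Field F] [Fintype F] [DecidableEq F]
    (hq : 2 < Fintype.card F)
    (x y : MonoidAlgebra ℤ (Matrix.SpecialLinearGroup (Fin 2) F))
    (hx : x ∈ Submodule.span ℤ ({elA ℤ F, elB ℤ F, elC ℤ F, elDp ℤ F, elDm ℤ F, elEp ℤ F, elEm ℤ F} : Set (MonoidAlgebra ℤ (Matrix.SpecialLinearGroup (Fin 2) F))))
    (hy : y ∈ Submodule.span ℤ ({elA ℤ F, elB ℤ F, elC ℤ F, elDp ℤ F, elDm ℤ F, elEp ℤ F, elEm ℤ F} : Set (MonoidAlgebra ℤ (Matrix.SpecialLinearGroup (Fin 2) F)))) :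
    x * y ∈ Submodule.span ℤ ({elA ℤ F, elB ℤ F, elC ℤ F, elDp ℤ F, elDm ℤ F, elEp ℤ F, elEm ℤ F} : Set (MonoidAlgebra ℤ (Matrix.SpecialLinearGroup (Fin 2) F))) := by
  show x * y ∈ SCP.S F
  induction hx using Submodule.span_induction with
  | mem a hga =>
    induction hy using Submodule.span_induction with
    | mem b hgb => exact SCP.key hga hgb
    | zero => rw [mul_zero]; exact zero_mem _
    | add u v _ _ ihu ihv => rw [mul_add]; exact add_mem ihu ihv
    | smul c u _ ihu => rw [mul_smul_comm]; exact Submodule.smul_mem _ _ ihu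
  | zero => rw [zero_mul]; exact zero_mem _
  | add u v _ _ ihu ihv => rw [add_mul]; exact add_mem ihu ihv
  | smul c u _ ihu => rw [smul_mul_assoc]; exact Submodule.smul_mem _ _ ihu
end

section
/- In ℤ[SL₂(F)] the following mixed products of C with D₊, D₋, E₊, E₋ hold: C·D₊ = C·E₋ = (q−1)(q−3)·C + (q−1)(q−2)·(D₋+E₊); C·D₋ = C·E₊ = (q−1)(q−3)·C + (q−1)(q−2)·(D₊+E₋); D₊·C = E₊·C = (q−1)(q−3)·C + (q−1)(q−2)·(D₋+E₋); D₋·C = E₋·C = (q−1)(q−3)·C + (q−1)(q−2)·(D₊+E₊). -/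
open MonoidAlgebra

open Finset
set_option linter.unusedSectionVars false
set_option maxHeartbeats 1000000

section Aux
open scoped Classical


variable {F : Type*} [Field F] [Fintype F] [DecidableEq F]

local notation "G" => Matrix.SpecialLinearGroup (Fin 2) F
local notation "M" => Matrix (Fin 2) (Fin 2) F

noncomputable def pat (b₁₁ b₁₂ b₂₁ b₂₂ : Bool) : Finset G :=
  Finset.univ.filter
      (fun g : G =>
        (b₁₁ = true ↔ (g : M) 0 0 ≠ 0) ∧
        (b₁₂ = true ↔ (g : M) 0 1 ≠ 0) ∧
        (b₂₁ = true ↔ (g : M) 1 0 ≠ 0) ∧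
        (b₂₂ = true ↔ (g : M) 1 1 ≠ 0))

lemma mem_pat {b₁₁ b₁₂ b₂₁ b₂₂ : Bool} {g : G} :
    g ∈ pat b₁₁ b₁₂ b₂₁ b₂₂ ↔
      ((b₁₁ = true ↔ (g : M) 0 0 ≠ 0) ∧
        (b₁₂ = true ↔ (g : M) 0 1 ≠ 0) ∧
        (b₂₁ = true ↔ (g : M) 1 0 ≠ 0) ∧
        (b₂₂ = true ↔ (g : M) 1 1 ≠ 0)) := by
  simp [pat]

lemma sum_of_apply (S : Finset G) (k : G) :
    (∑ g ∈ S, of ℤ G g).coeff k = if k ∈ S then 1 else 0 := by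
  rw [MonoidAlgebra.coeff_sum, Finset.sum_apply']
  simp only [MonoidAlgebra.of_apply, MonoidAlgebra.coeff_single, Finsupp.single_apply]
  rw [Finset.sum_ite_eq' S k (fun _ => (1:ℤ))]

lemma mul_sum_of_apply (S T : Finset G) (k : G) :
    ((∑ g ∈ S, of ℤ G g) * (∑ h ∈ T, of ℤ G h)).coeff k
      = ((S.filter fun g => g⁻¹ * k ∈ T).card : ℤ) := by
  rw [Finset.sum_mul_sum]
  simp only [← map_mul]
  rw [MonoidAlgebra.coeff_sum, Finset.sum_apply']
  have h1 : ∀ g ∈ S, (∑ h ∈ T, of ℤ G (g * h)).coeff k = if g⁻¹ * k ∈ T then 1 else 0 := by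
    intro g _
    rw [MonoidAlgebra.coeff_sum, Finset.sum_apply']
    simp only [MonoidAlgebra.of_apply, MonoidAlgebra.coeff_single, Finsupp.single_apply]
    have h2 : ∀ h : G, (g * h = k) ↔ (h = g⁻¹ * k) := fun h => by
      constructor
      · intro hh; rw [← hh]; group
      · intro hh; rw [hh]; group
    simp only [h2]
    rw [Finset.sum_ite_eq' T (g⁻¹*k) (fun _ => (1:ℤ))]
  rw [Finset.sum_congr rfl h1, Finset.sum_boole]

lemma mul_entry (g h : G) (i j : Fin 2) :
    ((g * h : G) : M) i j = (g : M) i 0 * (h : M) 0 j + (g : M) i 1 * (h : M) 1 j := by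
  rw [Matrix.SpecialLinearGroup.coe_mul, Matrix.mul_apply, Fin.sum_univ_two]

lemma det_entry (g : G) :
    (g : M) 0 0 * (g : M) 1 1 - (g : M) 0 1 * (g : M) 1 0 = 1 := by
  rw [← Matrix.det_fin_two]; exact g.2

noncomputable def Umat (a b : F) : G :=
  if ha : a ≠ 0 then ⟨!![a, b; 0, a⁻¹], by simp [Matrix.det_fin_two_of]; field_simp⟩ else 1

lemma Umat_coe (a b : F) (ha : a ≠ 0) : (Umat a b : M) = !![a, b; 0, a⁻¹] := by
  simp [Umat, ha]

lemma Umat_inv_coe (a b : F) (ha : a ≠ 0) :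
    (((Umat a b)⁻¹ : G) : M) = !![a⁻¹, -b; 0, a] := by
  rw [Matrix.SpecialLinearGroup.SL2_inv_expl]
  ext i j
  fin_cases i <;> fin_cases j <;> simp [Umat_coe _ _ ha]

lemma Umat_eq (a b : F) (ha : a ≠ 0) (u : G) (h00 : (u : M) 0 0 = a)
    (h01 : (u : M) 0 1 = b) (h10 : (u : M) 1 0 = 0) : Umat a b = u := by
  have hdet := det_entry u
  rw [h00, h01, h10] at hdet
  have h11 : (u : M) 1 1 = a⁻¹ := by field_simp; linear_combination hdet
  apply Subtype.ext
  rw [Umat_coe _ _ ha]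
  ext i j
  fin_cases i <;> fin_cases j <;> simp [h00, h01, h10, h11]

lemma count1 (k : G) (hx : (k : M) 0 0 ≠ 0) (hz : (k : M) 1 0 ≠ 0) :
    ((pat true true true true).filter (fun g : G => g⁻¹ * k ∈ pat true true false true)).card
      = ((Finset.univ.filter fun a : F => a ≠ 0) ×ˢ
          (Finset.univ.filter fun t : F =>
            t ≠ 0 ∧ t ≠ (k : M) 0 1 / (k : M) 0 0 ∧ t ≠ (k : M) 1 1 / (k : M) 1 0)).card := by
  apply Finset.card_nbij'
    (i := fun g => (((g⁻¹ * k : G) : M) 0 0, ((g⁻¹ * k : G) : M) 0 1 * (((g⁻¹ * k : G) : M) 0 0)⁻¹))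
    (j := fun p => k * (Umat p.1 (p.2 * p.1))⁻¹)
  · -- forward membership
    intro g hg
    beta_reduce
    rw [Finset.mem_coe, Finset.mem_filter] at hg
    obtain ⟨hgC, huD⟩ := hg
    rw [mem_pat] at hgC huD
    simp only [Bool.false_eq_true, true_iff, false_iff, not_not, ne_eq] at hgC huD
    obtain ⟨hg00, hg01, hg10, hg11⟩ := hgC
    obtain ⟨hu00, hu01, hu10, hu11⟩ := huD
    set u : G := g⁻¹ * k with hu
    have hgu : g * u = k := by rw [hu]; group
    have hk00 : (k : M) 0 0 = (g : M) 0 0 * (u : M) 0 0 := by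
      rw [← hgu, mul_entry, hu10]; ring
    have hk01 : (k : M) 0 1 = (g : M) 0 0 * (u : M) 0 1 + (g : M) 0 1 * (u : M) 1 1 := by
      rw [← hgu, mul_entry]
    have hk10 : (k : M) 1 0 = (g : M) 1 0 * (u : M) 0 0 := by
      rw [← hgu, mul_entry, hu10]; ring
    have hk11 : (k : M) 1 1 = (g : M) 1 0 * (u : M) 0 1 + (g : M) 1 1 * (u : M) 1 1 := by
      rw [← hgu, mul_entry]
    rw [Finset.mem_coe, Finset.mem_product, Finset.mem_filter, Finset.mem_filter]
    refine ⟨⟨Finset.mem_univ _, hu00⟩, Finset.mem_univ _, ?_, ?_, ?_⟩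
    · exact mul_ne_zero hu01 (inv_ne_zero hu00)
    · intro h
      simp only [] at h
      rw [hk01, hk00, eq_div_iff (by rw [hk00] at hx; exact hx)] at h
      -- h : u01 * u00⁻¹ * (g00 * u00) = g00*u01 + g01*u11
      have h2 : (g : M) 0 1 * (u : M) 1 1 * (u : M) 0 0 = 0 := by
        field_simp at h
        linear_combination -(u : M) 0 0 * h
      exact mul_ne_zero (mul_ne_zero hg01 hu11) hu00 h2
    · intro h
      simp only [] at h
      rw [hk11, hk10, eq_div_iff (by rw [hk10] at hz; exact hz)] at h
      have h2 : (g : M) 1 1 * (u : M) 1 1 * (u : M) 0 0 = 0 := by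
        field_simp at h
        linear_combination -(u : M) 0 0 * h
      exact mul_ne_zero (mul_ne_zero hg11 hu11) hu00 h2
  · -- backward membership
    intro p hp
    beta_reduce
    rw [Finset.mem_coe, Finset.mem_product, Finset.mem_filter, Finset.mem_filter] at hp
    obtain ⟨⟨-, ha⟩, -, ht0, hty, htw⟩ := hp
    set a := p.1
    set t := p.2
    have hinv := Umat_inv_coe a (t*a) ha
    have hUk : (k * (Umat a (t * a))⁻¹)⁻¹ * k = Umat a (t*a) := by group
    rw [Finset.mem_coe, Finset.mem_filter, mem_pat, mem_pat, hUk]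
    simp only [Bool.false_eq_true, true_iff, false_iff, not_not, ne_eq,
      Umat_coe _ _ ha, mul_entry, hinv]
    refine ⟨⟨?_, ?_, ?_, ?_⟩, ha, mul_ne_zero ht0 ha, rfl, inv_ne_zero ha⟩
    · simpa using mul_ne_zero hx (inv_ne_zero ha)
    · intro h
      apply hty
      have h2 : (k : M) 0 0 * (-(t * a)) + (k : M) 0 1 * a = 0 := by simpa using h
      have h3 : ((k : M) 0 1 - (k : M) 0 0 * t) * a = 0 := by linear_combination h2
      have h4 := (mul_eq_zero.mp h3).resolve_right ha
      rw [eq_div_iff hx]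
      linear_combination -h4
    · simpa using mul_ne_zero hz (inv_ne_zero ha)
    · intro h
      apply htw
      have h2 : (k : M) 1 0 * (-(t * a)) + (k : M) 1 1 * a = 0 := by simpa using h
      have h3 : ((k : M) 1 1 - (k : M) 1 0 * t) * a = 0 := by linear_combination h2
      have h4 := (mul_eq_zero.mp h3).resolve_right ha
      rw [eq_div_iff hz]
      linear_combination -h4
  · -- left inverse
    intro g hg
    beta_reduce
    rw [Finset.mem_coe, Finset.mem_filter] at hg
    obtain ⟨-, huD⟩ := hg
    rw [mem_pat] at huD
    simp only [Bool.false_eq_true, true_iff, false_iff, not_not, ne_eq] at huD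
    obtain ⟨hu00, hu01, hu10, hu11⟩ := huD
    simp only [inv_mul_cancel_right₀ hu00]
    rw [Umat_eq _ _ hu00 (g⁻¹*k) rfl rfl hu10]
    group
  · -- right inverse
    intro p hp
    beta_reduce
    rw [Finset.mem_coe, Finset.mem_product, Finset.mem_filter, Finset.mem_filter] at hp
    obtain ⟨⟨-, ha⟩, -, ht0, -, -⟩ := hp
    have hUk : (k * (Umat p.1 (p.2 * p.1))⁻¹)⁻¹ * k = Umat p.1 (p.2*p.1) := by group
    rw [hUk]
    rw [Umat_coe _ _ ha]
    simp [mul_inv_cancel_right₀ ha]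

lemma count2 (k : G) (hz : (k : M) 1 0 ≠ 0) (hw : (k : M) 1 1 ≠ 0) :
    ((pat true true false true).filter (fun g : G => g⁻¹ * k ∈ pat true true true true)).card
      = ((Finset.univ.filter fun a : F => a ≠ 0) ×ˢ
          (Finset.univ.filter fun t : F =>
            t ≠ 0 ∧ t ≠ (k : M) 0 0 / (k : M) 1 0 ∧ t ≠ (k : M) 0 1 / (k : M) 1 1)).card := by
  apply Finset.card_nbij'
    (i := fun g : G => ((g : M) 0 0, (g : M) 0 1 * (g : M) 0 0))
    (j := fun p : F × F => Umat p.1 (p.2 * p.1⁻¹))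
  · -- forward membership
    intro g hg
    beta_reduce
    rw [Finset.mem_coe, Finset.mem_filter] at hg
    obtain ⟨hgD, huC⟩ := hg
    rw [mem_pat] at hgD huC
    simp only [Bool.false_eq_true, true_iff, false_iff, not_not, ne_eq] at hgD huC
    obtain ⟨hg00, hg01, hg10, hg11⟩ := hgD
    obtain ⟨hu00, hu01, hu10, hu11⟩ := huC
    set u : G := g⁻¹ * k with hu
    have hgu : g * u = k := by rw [hu]; group
    have hdet2 : (g : M) 0 0 * (g : M) 1 1 = 1 := by
      have := det_entry g; rw [hg10] at this; linear_combination this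
    have hk00 : (k : M) 0 0 = (g : M) 0 0 * (u : M) 0 0 + (g : M) 0 1 * (u : M) 1 0 := by
      rw [← hgu, mul_entry]
    have hk01 : (k : M) 0 1 = (g : M) 0 0 * (u : M) 0 1 + (g : M) 0 1 * (u : M) 1 1 := by
      rw [← hgu, mul_entry]
    have hk10 : (k : M) 1 0 = (g : M) 1 1 * (u : M) 1 0 := by
      rw [← hgu, mul_entry, hg10]; ring
    have hk11 : (k : M) 1 1 = (g : M) 1 1 * (u : M) 1 1 := by
      rw [← hgu, mul_entry, hg10]; ring
    rw [Finset.mem_coe, Finset.mem_product, Finset.mem_filter, Finset.mem_filter]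
    refine ⟨⟨Finset.mem_univ _, hg00⟩, Finset.mem_univ _, ?_, ?_, ?_⟩
    · exact mul_ne_zero hg01 hg00
    · intro h
      simp only [] at h
      rw [hk00, hk10, eq_div_iff (by rw [hk10] at hz; exact hz)] at h
      have h2 : (g : M) 0 0 * (u : M) 0 0 = 0 := by linear_combination -h + (g:M) 0 1 * (u:M) 1 0 * hdet2
      exact mul_ne_zero hg00 hu00 h2
    · intro h
      simp only [] at h
      rw [hk01, hk11, eq_div_iff (by rw [hk11] at hw; exact hw)] at h
      have h2 : (g : M) 0 0 * (u : M) 0 1 = 0 := by linear_combination -h + (g:M) 0 1 * (u:M) 1 1 * hdet2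
      exact mul_ne_zero hg00 hu01 h2
  · -- backward membership
    intro p hp
    beta_reduce
    rw [Finset.mem_coe, Finset.mem_product, Finset.mem_filter, Finset.mem_filter] at hp
    obtain ⟨⟨-, ha⟩, -, ht0, htx, hty⟩ := hp
    set a := p.1
    set t := p.2
    have hinv := Umat_inv_coe a (t * a⁻¹) ha
    rw [Finset.mem_coe, Finset.mem_filter, mem_pat, mem_pat]
    simp only [Bool.false_eq_true, true_iff, false_iff, not_not, ne_eq,
      Umat_coe _ _ ha, mul_entry, hinv]
    refine ⟨⟨ha, mul_ne_zero ht0 (inv_ne_zero ha), rfl, inv_ne_zero ha⟩, ?_, ?_, ?_, ?_⟩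
    · intro h
      apply htx
      have h2 : a⁻¹ * (k : M) 0 0 + -(t * a⁻¹) * (k : M) 1 0 = 0 := by simpa using h
      have h3 : ((k : M) 0 0 - t * (k : M) 1 0) * a⁻¹ = 0 := by linear_combination h2
      have h4 := (mul_eq_zero.mp h3).resolve_right (inv_ne_zero ha)
      rw [eq_div_iff hz]
      linear_combination -h4
    · intro h
      apply hty
      have h2 : a⁻¹ * (k : M) 0 1 + -(t * a⁻¹) * (k : M) 1 1 = 0 := by simpa using h
      have h3 : ((k : M) 0 1 - t * (k : M) 1 1) * a⁻¹ = 0 := by linear_combination h2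
      have h4 := (mul_eq_zero.mp h3).resolve_right (inv_ne_zero ha)
      rw [eq_div_iff hw]
      linear_combination -h4
    · simpa using mul_ne_zero ha hz
    · simpa using mul_ne_zero ha hw
  · -- left inverse
    intro g hg
    beta_reduce
    rw [Finset.mem_coe, Finset.mem_filter] at hg
    obtain ⟨hgD, -⟩ := hg
    rw [mem_pat] at hgD
    simp only [Bool.false_eq_true, true_iff, false_iff, not_not, ne_eq] at hgD
    obtain ⟨hg00, hg01, hg10, hg11⟩ := hgD
    simp only [mul_inv_cancel_right₀ hg00]
    exact Umat_eq _ _ hg00 g rfl rfl hg10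
  · -- right inverse
    intro p hp
    beta_reduce
    rw [Finset.mem_coe, Finset.mem_product, Finset.mem_filter, Finset.mem_filter] at hp
    obtain ⟨⟨-, ha⟩, -⟩ := hp
    rw [Umat_coe _ _ ha]
    simp [inv_mul_cancel_right₀ ha]

lemma count1_empty (k : G) (h : (k : M) 0 0 = 0 ∨ (k : M) 1 0 = 0) :
    (pat true true true true).filter (fun g : G => g⁻¹ * k ∈ pat true true false true) = ∅ := by
  rw [Finset.eq_empty_iff_forall_notMem]
  intro g hg
  rw [Finset.mem_filter, mem_pat, mem_pat] at hg
  simp only [Bool.false_eq_true, true_iff, false_iff, not_not, ne_eq] at hg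
  obtain ⟨⟨hg00, hg01, hg10, hg11⟩, hu00, hu01, hu10, hu11⟩ := hg
  set u : G := g⁻¹ * k with hu
  have hgu : g * u = k := by rw [hu]; group
  have hk00 : (k : M) 0 0 = (g : M) 0 0 * (u : M) 0 0 := by
    rw [← hgu, mul_entry, hu10]; ring
  have hk10 : (k : M) 1 0 = (g : M) 1 0 * (u : M) 0 0 := by
    rw [← hgu, mul_entry, hu10]; ring
  rcases h with h | h
  · rw [hk00] at h; exact mul_ne_zero hg00 hu00 h
  · rw [hk10] at h; exact mul_ne_zero hg10 hu00 h

lemma count2_empty (k : G) (h : (k : M) 1 0 = 0 ∨ (k : M) 1 1 = 0) :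
    (pat true true false true).filter (fun g : G => g⁻¹ * k ∈ pat true true true true) = ∅ := by
  rw [Finset.eq_empty_iff_forall_notMem]
  intro g hg
  rw [Finset.mem_filter, mem_pat, mem_pat] at hg
  simp only [Bool.false_eq_true, true_iff, false_iff, not_not, ne_eq] at hg
  obtain ⟨⟨hg00, hg01, hg10, hg11⟩, hu00, hu01, hu10, hu11⟩ := hg
  set u : G := g⁻¹ * k with hu
  have hgu : g * u = k := by rw [hu]; group
  have hk10 : (k : M) 1 0 = (g : M) 1 1 * (u : M) 1 0 := by
    rw [← hgu, mul_entry, hg10]; ring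
  have hk11 : (k : M) 1 1 = (g : M) 1 1 * (u : M) 1 1 := by
    rw [← hgu, mul_entry, hg10]; ring
  rcases h with h | h
  · rw [hk10] at h; exact mul_ne_zero hg11 hu10 h
  · rw [hk11] at h; exact mul_ne_zero hg11 hu11 h

lemma filter_ne1_card : (Finset.univ.filter fun a : F => a ≠ 0).card = Fintype.card F - 1 := by
  have : (Finset.univ.filter fun a : F => a ≠ 0) = Finset.univ \ {0} := by
    ext t; simp
  rw [this, Finset.card_sdiff_of_subset (Finset.subset_univ _), Finset.card_univ, Finset.card_singleton]

lemma filter_ne3 (a b c : F) :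
    (Finset.univ.filter fun t : F => t ≠ a ∧ t ≠ b ∧ t ≠ c) = Finset.univ \ {a, b, c} := by
  ext t; simp [not_or]

lemma card3 (a b c : F) (hab : a ≠ b) (hac : a ≠ c) (hbc : b ≠ c) :
    (Finset.univ.filter fun t : F => t ≠ a ∧ t ≠ b ∧ t ≠ c).card = Fintype.card F - 3 := by
  rw [filter_ne3, Finset.card_sdiff_of_subset (Finset.subset_univ _), Finset.card_univ]
  rw [Finset.card_insert_of_notMem (by simp [hab, hac]),
    Finset.card_insert_of_notMem (by simp [hbc]), Finset.card_singleton]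

lemma card2 (a c : F) (hac : a ≠ c) :
    (Finset.univ.filter fun t : F => t ≠ a ∧ t ≠ a ∧ t ≠ c).card = Fintype.card F - 2 := by
  rw [filter_ne3, Finset.insert_idem, Finset.card_sdiff_of_subset (Finset.subset_univ _), Finset.card_univ]
  rw [Finset.card_insert_of_notMem (by simp [hac]), Finset.card_singleton]

lemma card2' (a b : F) (hab : a ≠ b) :
    (Finset.univ.filter fun t : F => t ≠ a ∧ t ≠ b ∧ t ≠ a).card = Fintype.card F - 2 := by
  have : ∀ t : F, (t ≠ a ∧ t ≠ b ∧ t ≠ a) ↔ (t ≠ a ∧ t ≠ a ∧ t ≠ b) := by tauto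
  simp only [this]
  exact card2 a b hab

noncomputable def clsum (b₁₁ b₁₂ b₂₁ b₂₂ : Bool) : MonoidAlgebra ℤ G :=
  ∑ g ∈ pat b₁₁ b₁₂ b₂₁ b₂₂, of ℤ G g

lemma cast_arith (n : ℕ) (hn : 2 < n) (q : ℤ) (hq : q = n) (j : ℕ) (hj : j ≤ 3) :
    ((n - 1) * (n - j) : ℕ) = (q - 1) * (q - j) := by
  subst hq
  have h1 : 1 ≤ n := by omega
  have h2 : j ≤ n := by omega
  rw [Nat.cast_mul, Nat.cast_sub h1, Nat.cast_sub h2]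
  push_cast
  ring

lemma hprod1 (hq : 2 < Fintype.card F) (q : ℤ) (hqc : q = Fintype.card F) :
    (clsum true true true true : MonoidAlgebra ℤ G) * clsum true true false true
      = ((q - 1) * (q - 3)) • clsum true true true true
        + ((q - 1) * (q - 2)) • (clsum true false true true + clsum true true true false) := by
  refine MonoidAlgebra.ext (Finsupp.ext fun k => ?_)
  simp only [clsum]
  rw [mul_sum_of_apply]
  rw [MonoidAlgebra.coeff_add, MonoidAlgebra.coeff_smul, MonoidAlgebra.coeff_smul, MonoidAlgebra.coeff_add,
    Finsupp.add_apply, Finsupp.smul_apply, Finsupp.smul_apply, Finsupp.add_apply]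
  rw [sum_of_apply, sum_of_apply, sum_of_apply]
  simp only [smul_eq_mul]
  by_cases hx : (k : M) 0 0 = 0
  · rw [count1_empty k (Or.inl hx)]
    simp [mem_pat, hx]
  by_cases hz : (k : M) 1 0 = 0
  · rw [count1_empty k (Or.inr hz)]
    simp [mem_pat, hz]
  rw [count1 k hx hz, Finset.card_product, filter_ne1_card]
  by_cases hy : (k : M) 0 1 = 0
  · have hw : (k : M) 1 1 ≠ 0 := by
      intro h; have hd := det_entry k; rw [hy, h] at hd; simp at hd
    have hd0 : (k : M) 0 1 / (k : M) 0 0 = 0 := by rw [hy, zero_div]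
    simp only [hd0]
    rw [card2 _ _ (Ne.symm (div_ne_zero hw hz))]
    rw [if_neg (by simp [mem_pat, hy]), if_pos (by simp [mem_pat, hx, hy, hz, hw]),
      if_neg (by simp [mem_pat, hw])]
    rw [Nat.cast_mul, Nat.cast_sub (show 1 ≤ Fintype.card F by omega),
      Nat.cast_sub (show 2 ≤ Fintype.card F by omega), ← hqc]
    push_cast; ring
  by_cases hw : (k : M) 1 1 = 0
  · have hd0 : (k : M) 1 1 / (k : M) 1 0 = 0 := by rw [hw, zero_div]
    simp only [hd0]
    rw [card2' _ _ (Ne.symm (div_ne_zero hy hx))]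
    rw [if_neg (by simp [mem_pat, hw]), if_neg (by simp [mem_pat, hy]),
      if_pos (by simp [mem_pat, hx, hy, hz, hw])]
    rw [Nat.cast_mul, Nat.cast_sub (show 1 ≤ Fintype.card F by omega),
      Nat.cast_sub (show 2 ≤ Fintype.card F by omega), ← hqc]
    push_cast; ring
  · have hne : (k : M) 0 1 / (k : M) 0 0 ≠ (k : M) 1 1 / (k : M) 1 0 := by
      rw [ne_eq, div_eq_div_iff hx hz]
      intro h
      have hd := det_entry k
      rw [show (k:M) 0 1 * (k:M) 1 0 = (k:M) 0 0 * (k:M) 1 1 from by linear_combination h] at hd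
      simp at hd
    rw [card3 _ _ _ (Ne.symm (div_ne_zero hy hx)) (Ne.symm (div_ne_zero hw hz)) hne]
    rw [if_pos (by simp [mem_pat, hx, hy, hz, hw]), if_neg (by simp [mem_pat, hy]),
      if_neg (by simp [mem_pat, hw])]
    rw [Nat.cast_mul, Nat.cast_sub (show 1 ≤ Fintype.card F by omega),
      Nat.cast_sub (show 3 ≤ Fintype.card F by omega), ← hqc]
    push_cast; ring

lemma hprod2 (hq : 2 < Fintype.card F) (q : ℤ) (hqc : q = Fintype.card F) :
    (clsum true true false true : MonoidAlgebra ℤ G) * clsum true true true true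
      = ((q - 1) * (q - 3)) • clsum true true true true
        + ((q - 1) * (q - 2)) • (clsum true false true true + clsum false true true true) := by
  refine MonoidAlgebra.ext (Finsupp.ext fun k => ?_)
  simp only [clsum]
  rw [mul_sum_of_apply]
  rw [MonoidAlgebra.coeff_add, MonoidAlgebra.coeff_smul, MonoidAlgebra.coeff_smul, MonoidAlgebra.coeff_add,
    Finsupp.add_apply, Finsupp.smul_apply, Finsupp.smul_apply, Finsupp.add_apply]
  rw [sum_of_apply, sum_of_apply, sum_of_apply]
  simp only [smul_eq_mul]
  by_cases hz : (k : M) 1 0 = 0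
  · rw [count2_empty k (Or.inl hz)]
    simp [mem_pat, hz]
  by_cases hw : (k : M) 1 1 = 0
  · rw [count2_empty k (Or.inr hw)]
    simp [mem_pat, hw]
  rw [count2 k hz hw, Finset.card_product, filter_ne1_card]
  by_cases hy : (k : M) 0 1 = 0
  · have hx : (k : M) 0 0 ≠ 0 := by
      intro h; have hd := det_entry k; rw [hy, h] at hd; simp at hd
    have hd0 : (k : M) 0 1 / (k : M) 1 1 = 0 := by rw [hy, zero_div]
    simp only [hd0]
    rw [card2' _ _ (Ne.symm (div_ne_zero hx hz))]
    rw [if_neg (by simp [mem_pat, hy]), if_pos (by simp [mem_pat, hx, hy, hz, hw]),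
      if_neg (by simp [mem_pat, hy])]
    rw [Nat.cast_mul, Nat.cast_sub (show 1 ≤ Fintype.card F by omega),
      Nat.cast_sub (show 2 ≤ Fintype.card F by omega), ← hqc]
    push_cast; ring
  by_cases hx : (k : M) 0 0 = 0
  · have hd0 : (k : M) 0 0 / (k : M) 1 0 = 0 := by rw [hx, zero_div]
    simp only [hd0]
    rw [card2 _ _ (Ne.symm (div_ne_zero hy hw))]
    rw [if_neg (by simp [mem_pat, hx]), if_neg (by simp [mem_pat, hx]),
      if_pos (by simp [mem_pat, hx, hy, hz, hw])]
    rw [Nat.cast_mul, Nat.cast_sub (show 1 ≤ Fintype.card F by omega),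
      Nat.cast_sub (show 2 ≤ Fintype.card F by omega), ← hqc]
    push_cast; ring
  · have hne : (k : M) 0 0 / (k : M) 1 0 ≠ (k : M) 0 1 / (k : M) 1 1 := by
      rw [ne_eq, div_eq_div_iff hz hw]
      intro h
      have hd := det_entry k
      rw [show (k:M) 0 0 * (k:M) 1 1 = (k:M) 0 1 * (k:M) 1 0 from by linear_combination h] at hd
      simp at hd
    rw [card3 _ _ _ (Ne.symm (div_ne_zero hx hz)) (Ne.symm (div_ne_zero hy hw)) hne]
    rw [if_pos (by simp [mem_pat, hx, hy, hz, hw]), if_neg (by simp [mem_pat, hy]),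
      if_neg (by simp [mem_pat, hx])]
    rw [Nat.cast_mul, Nat.cast_sub (show 1 ≤ Fintype.card F by omega),
      Nat.cast_sub (show 3 ≤ Fintype.card F by omega), ← hqc]
    push_cast; ring

noncomputable def wel : G := ⟨!![0,1;-1,0], by simp [Matrix.det_fin_two_of]⟩

lemma wel_coe : ((wel : G) : M) = !![0,1;-1,0] := rfl

lemma wel_inv_coe : (((wel : G)⁻¹ : G) : M) = !![0,-1;1,0] := by
  rw [Matrix.SpecialLinearGroup.SL2_inv_expl]
  ext i j
  fin_cases i <;> fin_cases j <;> simp [wel_coe]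

lemma mulw_left (b₁₁ b₁₂ b₂₁ b₂₂ : Bool) :
    of ℤ G wel * clsum b₁₁ b₁₂ b₂₁ b₂₂ = clsum b₂₁ b₂₂ b₁₁ b₁₂ := by
  simp only [clsum, Finset.mul_sum, ← map_mul]
  refine Finset.sum_nbij' (i := fun g : G => wel * g) (j := fun g : G => wel⁻¹ * g)
    ?_ ?_ ?_ ?_ ?_
  · intro g hg
    rw [mem_pat] at hg ⊢
    simp only [mul_entry, wel_coe]
    constructor
    · simpa using hg.2.2.1
    constructor
    · simpa using hg.2.2.2
    constructor
    · simpa [neg_ne_zero] using hg.1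
    · simpa [neg_ne_zero] using hg.2.1
  · intro g hg
    rw [mem_pat] at hg ⊢
    simp only [mul_entry, wel_inv_coe]
    constructor
    · simpa [neg_ne_zero] using hg.2.2.1
    constructor
    · simpa [neg_ne_zero] using hg.2.2.2
    constructor
    · simpa using hg.1
    · simpa using hg.2.1
  · intro g _; group
  · intro g _; group
  · intro g _; rfl

lemma mulw_right (b₁₁ b₁₂ b₂₁ b₂₂ : Bool) :
    clsum b₁₁ b₁₂ b₂₁ b₂₂ * of ℤ G wel = clsum b₁₂ b₁₁ b₂₂ b₂₁ := by
  simp only [clsum, Finset.sum_mul, ← map_mul]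
  refine Finset.sum_nbij' (i := fun g : G => g * wel) (j := fun g : G => g * wel⁻¹)
    ?_ ?_ ?_ ?_ ?_
  · intro g hg
    rw [mem_pat] at hg ⊢
    simp only [mul_entry, wel_coe]
    constructor
    · simpa [neg_ne_zero] using hg.2.1
    constructor
    · simpa using hg.1
    constructor
    · simpa [neg_ne_zero] using hg.2.2.2
    · simpa using hg.2.2.1
  · intro g hg
    rw [mem_pat] at hg ⊢
    simp only [mul_entry, wel_inv_coe]
    constructor
    · simpa using hg.2.1
    constructor
    · simpa [neg_ne_zero] using hg.1
    constructor
    · simpa using hg.2.2.2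
    · simpa [neg_ne_zero] using hg.2.2.1
  · intro g _; group
  · intro g _; group
  · intro g _; rfl


lemma suppClass_eq {F : Type*} [Field F] [Fintype F] [DecidableEq F] (b₁₁ b₁₂ b₂₁ b₂₂ : Bool) :
    suppClass ℤ F b₁₁ b₁₂ b₂₁ b₂₂ = clsum b₁₁ b₁₂ b₂₁ b₂₂ := rfl

end Aux

theorem elC_mixed_products (F : Type*) [Field F] [Fintype F] [DecidableEq F]
    (hq : 2 < Fintype.card F) (q : ℤ) (hqc : q = Fintype.card F) :
    elC ℤ F * elDp ℤ F =
        ((q - 1) * (q - 3)) • elC ℤ F + ((q - 1) * (q - 2)) • (elDm ℤ F + elEp ℤ F) ∧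
    elC ℤ F * elEm ℤ F =
        ((q - 1) * (q - 3)) • elC ℤ F + ((q - 1) * (q - 2)) • (elDm ℤ F + elEp ℤ F) ∧
    elC ℤ F * elDm ℤ F =
        ((q - 1) * (q - 3)) • elC ℤ F + ((q - 1) * (q - 2)) • (elDp ℤ F + elEm ℤ F) ∧
    elC ℤ F * elEp ℤ F =
        ((q - 1) * (q - 3)) • elC ℤ F + ((q - 1) * (q - 2)) • (elDp ℤ F + elEm ℤ F) ∧
    elDp ℤ F * elC ℤ F =
        ((q - 1) * (q - 3)) • elC ℤ F + ((q - 1) * (q - 2)) • (elDm ℤ F + elEm ℤ F) ∧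
    elEp ℤ F * elC ℤ F =
        ((q - 1) * (q - 3)) • elC ℤ F + ((q - 1) * (q - 2)) • (elDm ℤ F + elEm ℤ F) ∧
    elDm ℤ F * elC ℤ F =
        ((q - 1) * (q - 3)) • elC ℤ F + ((q - 1) * (q - 2)) • (elDp ℤ F + elEp ℤ F) ∧
    elEm ℤ F * elC ℤ F =
        ((q - 1) * (q - 3)) • elC ℤ F + ((q - 1) * (q - 2)) • (elDp ℤ F + elEp ℤ F) := by
  have eC : elC ℤ F = clsum (F := F) true true true true := rfl
  have eDp : elDp ℤ F = clsum (F := F) true true false true := rfl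
  have eDm : elDm ℤ F = clsum (F := F) true false true true := rfl
  have eEp : elEp ℤ F = clsum (F := F) true true true false := rfl
  have eEm : elEm ℤ F = clsum (F := F) false true true true := rfl
  rw [eC, eDp, eDm, eEp, eEm]
  have h1 := hprod1 (F := F) hq q hqc
  have h2 := hprod2 (F := F) hq q hqc
  have Cw := mulw_right (F := F) true true true true
  have wC := mulw_left (F := F) true true true true
  -- C * Em = C * Dp
  have hCEm : clsum (F := F) true true true true * clsum (F := F) false true true true
      = clsum (F := F) true true true true * clsum (F := F) true true false true := by
    rw [← mulw_left (F := F) true true false true, ← mul_assoc, Cw]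
  -- C * Ep = (C * Dp) * w
  have hCEp : clsum (F := F) true true true true * clsum (F := F) true true true false
      = ((q - 1) * (q - 3)) • clsum (F := F) true true true true
        + ((q - 1) * (q - 2)) • (clsum (F := F) true true false true + clsum (F := F) false true true true) := by
    rw [← mulw_right (F := F) true true false true, ← mul_assoc, h1]
    simp only [add_mul, smul_mul_assoc, mulw_right (F := F)]
    rw [add_comm (clsum (F := F) false true true true) (clsum (F := F) true true false true)]
  -- C * Dm = C * Ep
  have hCDm : clsum (F := F) true true true true * clsum (F := F) true false true true
      = clsum (F := F) true true true true * clsum (F := F) true true true false := by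
    rw [← mulw_left (F := F) true true true false, ← mul_assoc, Cw]
  -- Ep * C = Dp * C
  have hEpC : clsum (F := F) true true true false * clsum (F := F) true true true true
      = clsum (F := F) true true false true * clsum (F := F) true true true true := by
    rw [← mulw_right (F := F) true true false true, mul_assoc, wC]
  -- Em * C = w * (Dp * C)
  have hEmC : clsum (F := F) false true true true * clsum (F := F) true true true true
      = ((q - 1) * (q - 3)) • clsum (F := F) true true true true
        + ((q - 1) * (q - 2)) • (clsum (F := F) true true false true + clsum (F := F) true true true false) := by
    rw [← mulw_left (F := F) true true false true, mul_assoc, h2]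
    simp only [mul_add, mul_smul_comm, mulw_left (F := F)]
    rw [add_comm (clsum (F := F) true true true false) (clsum (F := F) true true false true)]
  -- Dm * C = w * (Ep * C) = w * (Dp * C)
  have hDmC : clsum (F := F) true false true true * clsum (F := F) true true true true
      = clsum (F := F) false true true true * clsum (F := F) true true true true := by
    rw [← mulw_left (F := F) true true true false, mul_assoc, hEpC, ← mul_assoc,
      mulw_left (F := F)]
  exact ⟨h1, hCEm.trans h1, hCDm.trans hCEp, hCEp, h2, hEpC.trans h2, hDmC.trans hEmC, hEmC⟩
end

section
/- In ℤ[SL₂(F)] one has D₊² = E₊·E₋ = (q−1)²·A + (q−1)(q−2)·D₊, and D₋² = E₋·E₊ = (q−1)²·A + (q−1)(q−2)·D₋. -/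
open MonoidAlgebra

namespace ElDAux
open Matrix
variable {F : Type*} [Field F] [Fintype F] [DecidableEq F]

def tmm (a : Fˣ) (b : F) : SpecialLinearGroup (Fin 2) F :=
  ⟨!![(a:F), b; 0, ((a⁻¹ : Fˣ) : F)], by simp [Matrix.det_fin_two_of]⟩

def wm : SpecialLinearGroup (Fin 2) F := ⟨!![0,-1;1,0], by simp [Matrix.det_fin_two_of]⟩
def wm' : SpecialLinearGroup (Fin 2) F := ⟨!![0,1;-1,0], by simp [Matrix.det_fin_two_of]⟩

lemma hww' : (wm : SpecialLinearGroup (Fin 2) F) * wm' = 1 := by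
  ext i j
  simp only [Matrix.SpecialLinearGroup.coe_mul]
  fin_cases i <;> fin_cases j <;> simp [wm, wm', Matrix.mul_apply, Fin.sum_univ_two]

lemma hw'w : (wm' : SpecialLinearGroup (Fin 2) F) * wm = 1 := by
  ext i j
  simp only [Matrix.SpecialLinearGroup.coe_mul]
  fin_cases i <;> fin_cases j <;> simp [wm, wm', Matrix.mul_apply, Fin.sum_univ_two]

lemma tmm_mul (a c : Fˣ) (b e : F) :
    tmm a b * tmm c e = tmm (a*c) ((a:F)*e + b * ((c⁻¹:Fˣ):F)) := by
  ext i j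
  simp only [Matrix.SpecialLinearGroup.coe_mul]
  fin_cases i <;> fin_cases j <;>
    simp [tmm, Matrix.mul_apply, Fin.sum_univ_two, _root_.mul_inv_rev, mul_comm]

lemma tmm_inj {a c : Fˣ} {b d : F} (h : tmm a b = tmm c d) : a = c ∧ b = d := by
  have h1 := congrArg (fun g : SpecialLinearGroup (Fin 2) F => (g : Matrix (Fin 2) (Fin 2) F) 0 0) h
  have h2 := congrArg (fun g : SpecialLinearGroup (Fin 2) F => (g : Matrix (Fin 2) (Fin 2) F) 0 1) h
  simp [tmm] at h1 h2
  exact ⟨Units.ext h1, h2⟩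

lemma elA_eq : elA ℤ F = ∑ a : Fˣ, of ℤ (SpecialLinearGroup (Fin 2) F) (tmm a 0) := by
  classical
  rw [elA, suppClass]
  rw [show (Finset.univ.filter _ ) = Finset.image (fun a : Fˣ => tmm a 0) Finset.univ from ?_]
  · exact Finset.sum_image fun a _ c _ h => (tmm_inj h).1
  · ext g
    simp only [Finset.mem_filter, Finset.mem_univ, true_and, Finset.mem_image]
    constructor
    · rintro ⟨h11, h12, h21, h22⟩
      simp only [Bool.false_eq_true, false_iff, not_not, not_ne_iff, true_iff,
        eq_self_iff_true] at h11 h12 h21 h22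
      have hdet := g.prop
      rw [Matrix.det_fin_two] at hdet
      rw [h12, h21] at hdet
      simp only [mul_zero, sub_zero, zero_mul] at hdet
      refine ⟨Units.mk0 _ h11, ?_⟩
      ext i j
      fin_cases i <;> fin_cases j <;>
        simp [tmm, h12, h21, inv_eq_of_mul_eq_one_right hdet]
    · rintro ⟨a, rfl⟩
      simp [tmm]

lemma elDp_eq :
    elDp ℤ F = ∑ p : Fˣ × Fˣ, of ℤ (SpecialLinearGroup (Fin 2) F) (tmm p.1 (p.2:F)) := by
  classical
  rw [elDp, suppClass]
  rw [show (Finset.univ.filter _ )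
      = Finset.image (fun p : Fˣ × Fˣ => tmm p.1 (p.2:F)) Finset.univ from ?_]
  · exact Finset.sum_image fun a _ c _ h =>
      Prod.ext (tmm_inj h).1 (Units.ext (tmm_inj h).2)
  · ext g
    simp only [Finset.mem_filter, Finset.mem_univ, true_and, Finset.mem_image]
    constructor
    · rintro ⟨h11, h12, h21, h22⟩
      simp only [Bool.false_eq_true, false_iff, not_not, not_ne_iff, true_iff,
        eq_self_iff_true] at h11 h12 h21 h22
      have hdet := g.prop
      rw [Matrix.det_fin_two] at hdet
      rw [h21] at hdet
      simp only [mul_zero, sub_zero, zero_mul] at hdet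
      refine ⟨(Units.mk0 _ h11, Units.mk0 _ h12), ?_⟩
      ext i j
      fin_cases i <;> fin_cases j <;>
        simp [tmm, h21, inv_eq_of_mul_eq_one_right hdet]
    · rintro ⟨⟨a, b⟩, rfl⟩
      simp [tmm]

lemma elEp_eq : elEp ℤ F = elDp ℤ F * of ℤ (SpecialLinearGroup (Fin 2) F) wm := by
  classical
  rw [elEp, elDp, suppClass, suppClass, Finset.sum_mul]
  simp only [← _root_.map_mul]
  refine Finset.sum_nbij' (fun g => g * wm') (fun g => g * wm) ?_ ?_ ?_ ?_ ?_
  · intro g hg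
    simp only [Finset.mem_filter, Finset.mem_univ, true_and] at hg ⊢
    obtain ⟨h11, h12, h21, h22⟩ := hg
    simp only [Bool.false_eq_true, false_iff, not_not, not_ne_iff, true_iff,
      eq_self_iff_true] at h11 h12 h21 h22
    simp only [Matrix.SpecialLinearGroup.coe_mul]
    simp [wm', Matrix.SpecialLinearGroup.coe_mul, Matrix.mul_apply, Matrix.vecMul, Matrix.vecHead, Matrix.vecTail, dotProduct, Fin.sum_univ_two,
      h11, h12, h21, h22]
  · intro g hg
    simp only [Finset.mem_filter, Finset.mem_univ, true_and] at hg ⊢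
    obtain ⟨h11, h12, h21, h22⟩ := hg
    simp only [Bool.false_eq_true, false_iff, not_not, not_ne_iff, true_iff,
      eq_self_iff_true] at h11 h12 h21 h22
    simp only [Matrix.SpecialLinearGroup.coe_mul]
    simp [wm, Matrix.SpecialLinearGroup.coe_mul, Matrix.mul_apply, Matrix.vecMul, Matrix.vecHead, Matrix.vecTail, dotProduct, Fin.sum_univ_two,
      h11, h12, h21, h22]
  · intro g _; rw [mul_assoc, hw'w, mul_one]
  · intro g _; rw [mul_assoc, hww', mul_one]
  · intro g _; rw [mul_assoc, hw'w, mul_one]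

lemma elEm_eq : elEm ℤ F = of ℤ (SpecialLinearGroup (Fin 2) F) wm' * elDp ℤ F := by
  classical
  rw [elEm, elDp, suppClass, suppClass, Finset.mul_sum]
  simp only [← _root_.map_mul]
  refine Finset.sum_nbij' (fun g => wm * g) (fun g => wm' * g) ?_ ?_ ?_ ?_ ?_
  · intro g hg
    simp only [Finset.mem_filter, Finset.mem_univ, true_and] at hg ⊢
    obtain ⟨h11, h12, h21, h22⟩ := hg
    simp only [Bool.false_eq_true, false_iff, not_not, not_ne_iff, true_iff,
      eq_self_iff_true] at h11 h12 h21 h22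
    simp only [Matrix.SpecialLinearGroup.coe_mul]
    simp [wm, Matrix.SpecialLinearGroup.coe_mul, Matrix.mul_apply, Matrix.vecMul, Matrix.vecHead, Matrix.vecTail, dotProduct, Fin.sum_univ_two,
      h11, h12, h21, h22]
  · intro g hg
    simp only [Finset.mem_filter, Finset.mem_univ, true_and] at hg ⊢
    obtain ⟨h11, h12, h21, h22⟩ := hg
    simp only [Bool.false_eq_true, false_iff, not_not, not_ne_iff, true_iff,
      eq_self_iff_true] at h11 h12 h21 h22
    simp only [Matrix.SpecialLinearGroup.coe_mul]
    simp [wm', Matrix.SpecialLinearGroup.coe_mul, Matrix.mul_apply, Matrix.vecMul, Matrix.vecHead, Matrix.vecTail, dotProduct, Fin.sum_univ_two,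
      h11, h12, h21, h22]
  · intro g _; rw [← mul_assoc, hw'w, one_mul]
  · intro g _; rw [← mul_assoc, hww', one_mul]
  · intro g _; rw [← mul_assoc, hw'w, one_mul]

lemma elDm_eq :
    elDm ℤ F = of ℤ (SpecialLinearGroup (Fin 2) F) wm' * elDp ℤ F
      * of ℤ (SpecialLinearGroup (Fin 2) F) wm := by
  classical
  rw [elDm, elDp, suppClass, suppClass, Finset.mul_sum, Finset.sum_mul]
  simp only [← _root_.map_mul]
  refine Finset.sum_nbij' (fun g => wm * g * wm') (fun g => wm' * g * wm) ?_ ?_ ?_ ?_ ?_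
  · intro g hg
    simp only [Finset.mem_filter, Finset.mem_univ, true_and] at hg ⊢
    obtain ⟨h11, h12, h21, h22⟩ := hg
    simp only [Bool.false_eq_true, false_iff, not_not, not_ne_iff, true_iff,
      eq_self_iff_true] at h11 h12 h21 h22
    simp only [Matrix.SpecialLinearGroup.coe_mul]
    simp [wm, wm', Matrix.SpecialLinearGroup.coe_mul, Matrix.mul_apply, Matrix.vecMul, Matrix.vecHead, Matrix.vecTail, dotProduct, Fin.sum_univ_two,
      h11, h12, h21, h22]
  · intro g hg
    simp only [Finset.mem_filter, Finset.mem_univ, true_and] at hg ⊢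
    obtain ⟨h11, h12, h21, h22⟩ := hg
    simp only [Bool.false_eq_true, false_iff, not_not, not_ne_iff, true_iff,
      eq_self_iff_true] at h11 h12 h21 h22
    simp only [Matrix.SpecialLinearGroup.coe_mul]
    simp [wm, wm', Matrix.SpecialLinearGroup.coe_mul, Matrix.mul_apply, Matrix.vecMul, Matrix.vecHead, Matrix.vecTail, dotProduct, Fin.sum_univ_two,
      h11, h12, h21, h22]
  · intro g _
    rw [show wm' * (wm * g * wm') * wm
        = (wm' * wm) * g * (wm' * wm) by noncomm_ring, hw'w, one_mul, mul_one]
  · intro g _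
    rw [show wm * (wm' * g * wm) * wm'
        = (wm * wm') * g * (wm * wm') by noncomm_ring, hww', one_mul, mul_one]
  · intro g _
    rw [show wm' * (wm * g * wm') * wm
        = (wm' * wm) * g * (wm' * wm) by noncomm_ring, hw'w, one_mul, mul_one]


noncomputable def NN : MonoidAlgebra ℤ (SpecialLinearGroup (Fin 2) F) :=
  ∑ b : F, of ℤ (SpecialLinearGroup (Fin 2) F) (tmm 1 b)

lemma sum_units_split {M : Type*} [AddCommMonoid M] (f : F → M) :
    ∑ b : F, f b = f 0 + ∑ b : Fˣ, f (b:F) := by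
  rw [← Finset.add_sum_erase _ f (Finset.mem_univ 0)]
  congr 1
  refine Finset.sum_bij' (fun b hb => Units.mk0 b (Finset.mem_erase.1 hb).1)
    (fun (a : Fˣ) _ => (a:F)) (fun _ _ => Finset.mem_univ _)
    (fun a _ => Finset.mem_erase.2 ⟨a.ne_zero, Finset.mem_univ _⟩)
    (fun _ _ => rfl) (fun a _ => Units.ext rfl) (fun _ _ => rfl)

lemma hMid :
    ∑ a : Fˣ, ∑ b : F, of ℤ (SpecialLinearGroup (Fin 2) F) (tmm a b)
      = elA ℤ F + elDp ℤ F := by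
  have : ∀ a : Fˣ, ∑ b : F, of ℤ (SpecialLinearGroup (Fin 2) F) (tmm a b)
      = of ℤ (SpecialLinearGroup (Fin 2) F) (tmm a 0)
        + ∑ b : Fˣ, of ℤ (SpecialLinearGroup (Fin 2) F) (tmm a (b:F)) :=
    fun a => sum_units_split _
  rw [Finset.sum_congr rfl fun a _ => this a, Finset.sum_add_distrib, ← elA_eq, elDp_eq,
    Fintype.sum_prod_type]

lemma hAN : elA ℤ F * NN = elA ℤ F + elDp ℤ F := by
  rw [← hMid, elA_eq, NN, Finset.sum_mul]
  refine Finset.sum_congr rfl fun a _ => ?_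
  rw [Finset.mul_sum]
  calc ∑ b : F, of ℤ (SpecialLinearGroup (Fin 2) F) (tmm a 0)
          * of ℤ (SpecialLinearGroup (Fin 2) F) (tmm 1 b)
      = ∑ b : F, of ℤ (SpecialLinearGroup (Fin 2) F) (tmm a ((a:F)*b)) := by
        refine Finset.sum_congr rfl fun b _ => ?_
        rw [← _root_.map_mul, tmm_mul]
        norm_num
    _ = ∑ b : F, of ℤ (SpecialLinearGroup (Fin 2) F) (tmm a b) :=
        Fintype.sum_equiv (Equiv.mulLeft₀ (a:F) a.ne_zero) _ _ (fun b => rfl)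

lemma hNA : NN * elA ℤ F = elA ℤ F + elDp ℤ F := by
  rw [← hMid, elA_eq, NN, Finset.sum_mul]
  simp only [Finset.mul_sum]
  rw [Finset.sum_comm]
  refine Finset.sum_congr rfl fun a _ => ?_
  calc ∑ b : F, of ℤ (SpecialLinearGroup (Fin 2) F) (tmm 1 b)
          * of ℤ (SpecialLinearGroup (Fin 2) F) (tmm a 0)
      = ∑ b : F, of ℤ (SpecialLinearGroup (Fin 2) F) (tmm a (b * ((a⁻¹:Fˣ):F))) := by
        refine Finset.sum_congr rfl fun b _ => ?_
        rw [← _root_.map_mul, tmm_mul]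
        norm_num
    _ = ∑ b : F, of ℤ (SpecialLinearGroup (Fin 2) F) (tmm a b) :=
        Fintype.sum_equiv (Equiv.mulRight₀ ((a⁻¹:Fˣ):F) (a⁻¹).ne_zero) _ _ (fun b => rfl)

lemma hA2 : elA ℤ F * elA ℤ F = Fintype.card Fˣ • elA ℤ F := by
  rw [elA_eq, Finset.sum_mul]
  have key : ∀ a : Fˣ, ∑ c : Fˣ, of ℤ (SpecialLinearGroup (Fin 2) F) (tmm a 0)
      * of ℤ (SpecialLinearGroup (Fin 2) F) (tmm c 0)
      = ∑ c : Fˣ, of ℤ (SpecialLinearGroup (Fin 2) F) (tmm c 0) := by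
    intro a
    calc ∑ c : Fˣ, of ℤ (SpecialLinearGroup (Fin 2) F) (tmm a 0)
            * of ℤ (SpecialLinearGroup (Fin 2) F) (tmm c 0)
        = ∑ c : Fˣ, of ℤ (SpecialLinearGroup (Fin 2) F) (tmm (a*c) 0) := by
          refine Finset.sum_congr rfl fun c _ => ?_
          rw [← _root_.map_mul, tmm_mul]
          norm_num
      _ = ∑ c : Fˣ, of ℤ (SpecialLinearGroup (Fin 2) F) (tmm c 0) :=
          Fintype.sum_equiv (Equiv.mulLeft a) _ _ (fun c => rfl)
  rw [Finset.sum_congr rfl fun a _ => (Finset.mul_sum _ _ _).trans (key a),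
    Finset.sum_const, Finset.card_univ]

lemma hN2 : NN (F := F) * NN = Fintype.card F • NN := by
  rw [NN, Finset.sum_mul]
  have key : ∀ b : F, ∑ e : F, of ℤ (SpecialLinearGroup (Fin 2) F) (tmm 1 b)
      * of ℤ (SpecialLinearGroup (Fin 2) F) (tmm 1 e)
      = ∑ e : F, of ℤ (SpecialLinearGroup (Fin 2) F) (tmm 1 e) := by
    intro b
    calc ∑ e : F, of ℤ (SpecialLinearGroup (Fin 2) F) (tmm 1 b)
            * of ℤ (SpecialLinearGroup (Fin 2) F) (tmm 1 e)
        = ∑ e : F, of ℤ (SpecialLinearGroup (Fin 2) F) (tmm 1 (e + b)) := by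
          refine Finset.sum_congr rfl fun e _ => ?_
          rw [← _root_.map_mul, tmm_mul]
          norm_num
      _ = ∑ e : F, of ℤ (SpecialLinearGroup (Fin 2) F) (tmm 1 e) :=
          Fintype.sum_equiv (Equiv.addRight b) _ _ (fun e => rfl)
  rw [Finset.sum_congr rfl fun b _ => (Finset.mul_sum _ _ _).trans (key b),
    Finset.sum_const, Finset.card_univ]

lemma hwconj : ∀ a : Fˣ, wm' * tmm a 0 * wm = tmm a⁻¹ 0 := by
  intro a
  ext i j
  simp only [Matrix.SpecialLinearGroup.coe_mul]
  fin_cases i <;> fin_cases j <;>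
    simp [wm, wm', tmm, Matrix.mul_apply, Matrix.vecMul, Matrix.vecHead, Matrix.vecTail,
      dotProduct, Fin.sum_univ_two]

lemma hAconj :
    of ℤ (SpecialLinearGroup (Fin 2) F) wm' * elA ℤ F * of ℤ (SpecialLinearGroup (Fin 2) F) wm
      = elA ℤ F := by
  rw [elA_eq, Finset.mul_sum, Finset.sum_mul]
  calc ∑ a : Fˣ, of ℤ (SpecialLinearGroup (Fin 2) F) wm'
          * of ℤ (SpecialLinearGroup (Fin 2) F) (tmm a 0)
          * of ℤ (SpecialLinearGroup (Fin 2) F) wm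
      = ∑ a : Fˣ, of ℤ (SpecialLinearGroup (Fin 2) F) (tmm a⁻¹ 0) := by
        refine Finset.sum_congr rfl fun a _ => ?_
        rw [← _root_.map_mul, ← _root_.map_mul, hwconj]
    _ = ∑ a : Fˣ, of ℤ (SpecialLinearGroup (Fin 2) F) (tmm a 0) :=
        Fintype.sum_equiv (Equiv.inv Fˣ) _ _ (fun a => rfl)

end ElDAux

open ElDAux Matrix

theorem elD_sq (F : Type*) [Field F] [Fintype F] [DecidableEq F]
    (hq : 2 < Fintype.card F) (q : ℤ) (hqc : q = Fintype.card F) :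
    elDp ℤ F * elDp ℤ F = (q - 1) ^ 2 • elA ℤ F + ((q - 1) * (q - 2)) • elDp ℤ F ∧
    elEp ℤ F * elEm ℤ F = (q - 1) ^ 2 • elA ℤ F + ((q - 1) * (q - 2)) • elDp ℤ F ∧
    elDm ℤ F * elDm ℤ F = (q - 1) ^ 2 • elA ℤ F + ((q - 1) * (q - 2)) • elDm ℤ F ∧
    elEm ℤ F * elEp ℤ F = (q - 1) ^ 2 • elA ℤ F + ((q - 1) * (q - 2)) • elDm ℤ F := by
  set G := SpecialLinearGroup (Fin 2) F
  set A := elA ℤ F with hA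
  set Dp := elDp ℤ F with hDp
  set N := NN (F := F) with hN
  have hcard : ((Fintype.card Fˣ : ℕ) : ℤ) = q - 1 := by
    rw [Fintype.card_units, hqc]
    have h1 : (1:ℕ) ≤ Fintype.card F := by omega
    push_cast [Nat.cast_sub h1]
    ring
  have hA2' : A * A = (q - 1) • A := by
    rw [hA2, ← hcard, natCast_zsmul]
  have hN2' : N * N = q • N := by
    rw [hN2, hqc, natCast_zsmul]
  have hAN' : A * N = A + Dp := hAN
  have hNA' : N * A = A + Dp := hNA
  have hcomm : A * N = N * A := hAN'.trans hNA'.symm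
  have hDpAN : Dp = A * N - A := by rw [hAN']; abel
  have key : Dp * Dp = (q - 1) ^ 2 • A + ((q - 1) * (q - 2)) • Dp := by
    have expand : Dp * Dp = (A*A)*(N*N) - (A*A)*N - (A*A)*N + A*A := by
      rw [hDpAN]
      calc (A*N - A)*(A*N - A) = A*(N*A)*N - A*(N*A) - (A*A)*N + A*A := by noncomm_ring
        _ = A*(A*N)*N - A*(A*N) - (A*A)*N + A*A := by rw [← hcomm]
        _ = (A*A)*(N*N) - (A*A)*N - (A*A)*N + A*A := by noncomm_ring
    rw [expand, hA2', hN2', smul_mul_assoc, smul_mul_assoc, mul_smul_comm, smul_smul, hAN']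
    module
  have hofw : of ℤ G wm * of ℤ G wm' = 1 := by
    rw [← _root_.map_mul, hww', _root_.map_one]
  have hofw' : of ℤ G wm' * of ℤ G wm = 1 := by
    rw [← _root_.map_mul, hw'w, _root_.map_one]
  have hEpEm : elEp ℤ F * elEm ℤ F = Dp * Dp := by
    rw [elEp_eq, elEm_eq]
    calc (Dp * of ℤ G wm) * (of ℤ G wm' * Dp)
        = Dp * (of ℤ G wm * of ℤ G wm') * Dp := by noncomm_ring
      _ = Dp * Dp := by rw [hofw, mul_one]
  have hconjsq : of ℤ G wm' * (Dp * Dp) * of ℤ G wm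
      = (q - 1) ^ 2 • A + ((q - 1) * (q - 2)) • elDm ℤ F := by
    rw [key, elDm_eq, mul_add, add_mul, mul_smul_comm, mul_smul_comm, smul_mul_assoc,
      smul_mul_assoc, show of ℤ G wm' * A * of ℤ G wm = A from hAconj]
  have hDmDm : elDm ℤ F * elDm ℤ F = of ℤ G wm' * (Dp * Dp) * of ℤ G wm := by
    rw [elDm_eq]
    calc (of ℤ G wm' * Dp * of ℤ G wm) * (of ℤ G wm' * Dp * of ℤ G wm)
        = of ℤ G wm' * (Dp * ((of ℤ G wm * of ℤ G wm') * Dp)) * of ℤ G wm := by noncomm_ring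
      _ = of ℤ G wm' * (Dp * Dp) * of ℤ G wm := by rw [hofw, one_mul]
  have hEmEp : elEm ℤ F * elEp ℤ F = of ℤ G wm' * (Dp * Dp) * of ℤ G wm := by
    rw [elEm_eq, elEp_eq]
    noncomm_ring
  exact ⟨key, by rw [hEpEm, key], by rw [hDmDm, hconjsq], by rw [hEmEp, hconjsq]⟩
end

section
/- In ℤ[SL₂(F)] the following mixed products of D₊, D₋ with E₊, E₋ hold: D₊·E₊ = E₊·D₋ = (q−1)²·B + (q−1)(q−2)·E₊; E₋·D₊ = D₋·E₋ = (q−1)²·B + (q−1)(q−2)·E₋; E₊·D₊ = D₊·E₋ = (q−1)·(C + D₋); D₋·E₊ = E₋·D₋ = (q−1)·(C + D₊). -/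
set_option linter.unusedSectionVars false
set_option maxHeartbeats 1000000
set_option linter.unreachableTactic false
set_option linter.unnecessarySeqFocus false
set_option linter.unusedTactic false

open MonoidAlgebra

namespace SLAux

variable {F : Type*} [Field F] [Fintype F] [DecidableEq F]

lemma sum_field_split {M : Type*} [AddCommMonoid M] (f : F → M) :
    ∑ s : F, f s = f 0 + ∑ u : Fˣ, f ↑u := by
  rw [← Finset.add_sum_erase Finset.univ f (Finset.mem_univ 0)]
  congr 1
  refine (Finset.sum_bij' (fun s hs => Units.mk0 s (Finset.ne_of_mem_erase hs))
    (fun u _ => (u : F)) (fun _ _ => Finset.mem_univ _)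
    (fun u _ => Finset.mem_erase.2 ⟨u.ne_zero, Finset.mem_univ _⟩) ?_ ?_ ?_)
  · intro s hs; rfl
  · intro u _; exact Units.ext rfl
  · intro s hs; rfl

lemma sum_units_affine {M : Type*} [AddCommGroup M] (f : F → M) (a c : F) (ha : a ≠ 0) :
    ∑ x : Fˣ, f (a * ↑x + c) = (∑ s : F, f s) - f c := by
  rw [← Finset.sum_erase_eq_sub (Finset.mem_univ c)]
  refine Finset.sum_bij' (fun x _ => a * (x : F) + c)
    (fun s hs => Units.mk0 ((s - c) * a⁻¹) ?_) (fun x _ => ?_) (fun _ _ => Finset.mem_univ _)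
    ?_ ?_ ?_
  · have := Finset.ne_of_mem_erase hs
    intro h
    apply this
    have hsc : s - c = 0 := by
      rcases mul_eq_zero.1 h with h' | h'
      · exact h'
      · exact absurd h' (inv_ne_zero ha)
    exact sub_eq_zero.mp hsc
  · refine Finset.mem_erase.2 ⟨?_, Finset.mem_univ _⟩
    intro h
    have h' : a * (x : F) + c = c := h
    have : a * (x : F) = 0 := by linear_combination h'
    rcases mul_eq_zero.1 this with h' | h'
    · exact ha h'
    · exact x.ne_zero h'
  · intro x _; apply Units.ext; rw [Units.val_mk0]; field_simp; ring
  · intro s hs; rw [Units.val_mk0]; field_simp; ring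
  · intro x _; rfl

def mk2 (a b c d : F) (h : a * d - b * c = 1) : Matrix.SpecialLinearGroup (Fin 2) F :=
  ⟨!![a, b; c, d], by rw [Matrix.det_fin_two_of]; exact h⟩

@[simp] lemma mk2_coe (a b c d : F) (h) :
    ((mk2 a b c d h : Matrix.SpecialLinearGroup (Fin 2) F) : Matrix (Fin 2) (Fin 2) F)
      = !![a, b; c, d] := rfl

lemma det2 (g : Matrix.SpecialLinearGroup (Fin 2) F) :
    (g : Matrix (Fin 2) (Fin 2) F) 0 0 * (g : Matrix (Fin 2) (Fin 2) F) 1 1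
      - (g : Matrix (Fin 2) (Fin 2) F) 0 1 * (g : Matrix (Fin 2) (Fin 2) F) 1 0 = 1 := by
  have := g.prop
  rwa [Matrix.det_fin_two] at this

lemma eq_mk2 (g : Matrix.SpecialLinearGroup (Fin 2) F) {a b c d : F} (h : a * d - b * c = 1)
    (e1 : (g : Matrix (Fin 2) (Fin 2) F) 0 0 = a) (e2 : (g : Matrix (Fin 2) (Fin 2) F) 0 1 = b)
    (e3 : (g : Matrix (Fin 2) (Fin 2) F) 1 0 = c) (e4 : (g : Matrix (Fin 2) (Fin 2) F) 1 1 = d) :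
    g = mk2 a b c d h := by
  apply Subtype.ext
  rw [mk2_coe, Matrix.eta_fin_two ((g : Matrix (Fin 2) (Fin 2) F)), e1, e2, e3, e4]

noncomputable def tT (u v : Fˣ) : Matrix.SpecialLinearGroup (Fin 2) F :=
  mk2 u v 0 ((u : F)⁻¹) (by field_simp; ring)

noncomputable def tL (u g : Fˣ) : Matrix.SpecialLinearGroup (Fin 2) F :=
  mk2 u 0 g ((u : F)⁻¹) (by field_simp; ring)

noncomputable def tU (x z : Fˣ) : Matrix.SpecialLinearGroup (Fin 2) F :=
  mk2 x (-(z : F)⁻¹) z 0 (by field_simp; ring)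

noncomputable def tP (z d : Fˣ) : Matrix.SpecialLinearGroup (Fin 2) F :=
  mk2 0 (-(z : F)⁻¹) z d (by field_simp; ring)

noncomputable def tV (g : Fˣ) : Matrix.SpecialLinearGroup (Fin 2) F :=
  mk2 0 (-(g : F)⁻¹) g 0 (by field_simp; ring)

noncomputable def tW (a g d : Fˣ) : Matrix.SpecialLinearGroup (Fin 2) F :=
  mk2 a (((a : F) * d - 1) * (g : F)⁻¹) g d (by field_simp; ring)

noncomputable def tW' (a b d : Fˣ) : Matrix.SpecialLinearGroup (Fin 2) F :=
  mk2 a b (((a : F) * d - 1) * (b : F)⁻¹) d (by field_simp; ring)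

def sg : Matrix.SpecialLinearGroup (Fin 2) F := mk2 0 1 (-1) 0 (by ring)

lemma suppClass_param (b₁₁ b₁₂ b₂₁ b₂₂ : Bool) {ι : Type*} [DecidableEq ι]
    (s : Finset ι) (m : ι → Matrix.SpecialLinearGroup (Fin 2) F)
    (inj : ∀ i ∈ s, ∀ j ∈ s, m i = m j → i = j)
    (hmem : ∀ i ∈ s,
      (b₁₁ = true ↔ (m i : Matrix (Fin 2) (Fin 2) F) 0 0 ≠ 0) ∧
      (b₁₂ = true ↔ (m i : Matrix (Fin 2) (Fin 2) F) 0 1 ≠ 0) ∧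
      (b₂₁ = true ↔ (m i : Matrix (Fin 2) (Fin 2) F) 1 0 ≠ 0) ∧
      (b₂₂ = true ↔ (m i : Matrix (Fin 2) (Fin 2) F) 1 1 ≠ 0))
    (hsurj : ∀ g : Matrix.SpecialLinearGroup (Fin 2) F,
      ((b₁₁ = true ↔ (g : Matrix (Fin 2) (Fin 2) F) 0 0 ≠ 0) ∧
       (b₁₂ = true ↔ (g : Matrix (Fin 2) (Fin 2) F) 0 1 ≠ 0) ∧
       (b₂₁ = true ↔ (g : Matrix (Fin 2) (Fin 2) F) 1 0 ≠ 0) ∧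
       (b₂₂ = true ↔ (g : Matrix (Fin 2) (Fin 2) F) 1 1 ≠ 0)) → ∃ i ∈ s, m i = g) :
    suppClass ℤ F b₁₁ b₁₂ b₂₁ b₂₂
      = ∑ i ∈ s, of ℤ (Matrix.SpecialLinearGroup (Fin 2) F) (m i) := by
  classical
  rw [suppClass, ← Finset.sum_image (g := m) (f := fun g => of ℤ (Matrix.SpecialLinearGroup (Fin 2) F) g) inj]
  congr 1
  ext g
  simp only [Finset.mem_filter, Finset.mem_univ, true_and, Finset.mem_image]
  constructor
  · intro hg
    obtain ⟨i, hi, hig⟩ := hsurj g hg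
    exact ⟨i, hi, hig⟩
  · rintro ⟨i, hi, rfl⟩
    exact hmem i hi

lemma elDp_eq : elDp ℤ F = ∑ p : Fˣ × Fˣ,
    of ℤ (Matrix.SpecialLinearGroup (Fin 2) F) (tT p.1 p.2) := by
  rw [elDp]
  refine suppClass_param true true false true Finset.univ (fun p : Fˣ × Fˣ => tT p.1 p.2) ?_ ?_ ?_
  · rintro ⟨u, v⟩ - ⟨u', v'⟩ - h
    replace h : tT u v = tT u' v' := h
    have h1 : ((tT u v : Matrix.SpecialLinearGroup (Fin 2) F) : Matrix (Fin 2) (Fin 2) F) 0 0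
        = ((tT u' v' : Matrix.SpecialLinearGroup (Fin 2) F) : Matrix (Fin 2) (Fin 2) F) 0 0 := by
      rw [h]
    have h2 : ((tT u v : Matrix.SpecialLinearGroup (Fin 2) F) : Matrix (Fin 2) (Fin 2) F) 0 1
        = ((tT u' v' : Matrix.SpecialLinearGroup (Fin 2) F) : Matrix (Fin 2) (Fin 2) F) 0 1 := by
      rw [h]
    simp only [tT, mk2_coe, Matrix.cons_val', Matrix.cons_val_zero, Matrix.cons_val_one,
      Matrix.head_cons, Matrix.empty_val', Matrix.cons_val_fin_one, Matrix.head_fin_const] at h1 h2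
    exact Prod.ext (Units.ext h1) (Units.ext h2)
  · rintro ⟨u, v⟩ -
    simp [tT]
  · intro g hg
    obtain ⟨h1, h2, h3, h4⟩ := hg
    replace h1 := h1.mp rfl
    replace h2 := h2.mp rfl
    replace h3 : (g : Matrix (Fin 2) (Fin 2) F) 1 0 = 0 := by
      by_contra h; exact Bool.false_ne_true (h3.mpr h)
    have hd := det2 g
    rw [h3, mul_zero, sub_zero] at hd
    refine ⟨(Units.mk0 _ h1, Units.mk0 _ h2), Finset.mem_univ _, ?_⟩
    exact (eq_mk2 g _ rfl rfl h3 (eq_inv_of_mul_eq_one_left (by rw [Units.val_mk0]; linear_combination hd))).symm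


lemma entry_eq {g h : Matrix.SpecialLinearGroup (Fin 2) F} (e : g = h) (i j : Fin 2) :
    (g : Matrix (Fin 2) (Fin 2) F) i j = (h : Matrix (Fin 2) (Fin 2) F) i j := by rw [e]

lemma elDm_eq : elDm ℤ F = ∑ p : Fˣ × Fˣ,
    of ℤ (Matrix.SpecialLinearGroup (Fin 2) F) (tL p.1 p.2) := by
  rw [elDm]
  refine suppClass_param true false true true Finset.univ (fun p : Fˣ × Fˣ => tL p.1 p.2) ?_ ?_ ?_
  · rintro ⟨u, v⟩ - ⟨u', v'⟩ - h
    replace h : tL u v = tL u' v' := h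
    exact Prod.ext (Units.ext (by simpa [tL] using entry_eq h 0 0))
      (Units.ext (by simpa [tL] using entry_eq h 1 0))
  · rintro ⟨u, v⟩ -
    simp [tL]
  · intro g hg
    obtain ⟨h1, h2, h3, h4⟩ := hg
    replace h1 := h1.mp rfl
    replace h3 := h3.mp rfl
    replace h2 : (g : Matrix (Fin 2) (Fin 2) F) 0 1 = 0 := by
      by_contra h; exact Bool.false_ne_true (h2.mpr h)
    have hd := det2 g
    rw [h2, zero_mul, sub_zero] at hd
    refine ⟨(Units.mk0 _ h1, Units.mk0 _ h3), Finset.mem_univ _, ?_⟩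
    exact (eq_mk2 g _ rfl h2 rfl
      (eq_inv_of_mul_eq_one_left (by rw [Units.val_mk0]; linear_combination hd))).symm

lemma elEp_eq : elEp ℤ F = ∑ p : Fˣ × Fˣ,
    of ℤ (Matrix.SpecialLinearGroup (Fin 2) F) (tU p.1 p.2) := by
  rw [elEp]
  refine suppClass_param true true true false Finset.univ (fun p : Fˣ × Fˣ => tU p.1 p.2) ?_ ?_ ?_
  · rintro ⟨u, v⟩ - ⟨u', v'⟩ - h
    replace h : tU u v = tU u' v' := h
    exact Prod.ext (Units.ext (by simpa [tU] using entry_eq h 0 0))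
      (Units.ext (by simpa [tU] using entry_eq h 1 0))
  · rintro ⟨u, v⟩ -
    simp [tU]
  · intro g hg
    obtain ⟨h1, h2, h3, h4⟩ := hg
    replace h1 := h1.mp rfl
    replace h3 := h3.mp rfl
    replace h4 : (g : Matrix (Fin 2) (Fin 2) F) 1 1 = 0 := by
      by_contra h; exact Bool.false_ne_true (h4.mpr h)
    have hd := det2 g
    rw [h4, mul_zero, zero_sub] at hd
    refine ⟨(Units.mk0 _ h1, Units.mk0 _ h3), Finset.mem_univ _, ?_⟩
    refine (eq_mk2 g _ rfl ?_ rfl h4).symm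
    rw [Units.val_mk0]
    have h3' := h3
    field_simp
    linear_combination -hd

lemma elEm_eq : elEm ℤ F = ∑ p : Fˣ × Fˣ,
    of ℤ (Matrix.SpecialLinearGroup (Fin 2) F) (tP p.1 p.2) := by
  rw [elEm]
  refine suppClass_param false true true true Finset.univ (fun p : Fˣ × Fˣ => tP p.1 p.2) ?_ ?_ ?_
  · rintro ⟨u, v⟩ - ⟨u', v'⟩ - h
    replace h : tP u v = tP u' v' := h
    exact Prod.ext (Units.ext (by simpa [tP] using entry_eq h 1 0))
      (Units.ext (by simpa [tP] using entry_eq h 1 1))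
  · rintro ⟨u, v⟩ -
    simp [tP]
  · intro g hg
    obtain ⟨h1, h2, h3, h4⟩ := hg
    replace h3 := h3.mp rfl
    replace h4 := h4.mp rfl
    replace h1 : (g : Matrix (Fin 2) (Fin 2) F) 0 0 = 0 := by
      by_contra h; exact Bool.false_ne_true (h1.mpr h)
    have hd := det2 g
    rw [h1, zero_mul, zero_sub] at hd
    refine ⟨(Units.mk0 _ h3, Units.mk0 _ h4), Finset.mem_univ _, ?_⟩
    refine (eq_mk2 g _ h1 ?_ rfl rfl).symm
    rw [Units.val_mk0]
    field_simp
    linear_combination -hd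

lemma elB_eq : elB ℤ F = ∑ u : Fˣ,
    of ℤ (Matrix.SpecialLinearGroup (Fin 2) F) (tV u) := by
  rw [elB]
  refine suppClass_param false true true false Finset.univ (fun u : Fˣ => tV u) ?_ ?_ ?_
  · rintro u - u' - h
    replace h : tV u = tV u' := h
    exact Units.ext (by simpa [tV] using entry_eq h 1 0)
  · rintro u -
    simp [tV]
  · intro g hg
    obtain ⟨h1, h2, h3, h4⟩ := hg
    replace h3 := h3.mp rfl
    replace h1 : (g : Matrix (Fin 2) (Fin 2) F) 0 0 = 0 := by
      by_contra h; exact Bool.false_ne_true (h1.mpr h)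
    replace h4 : (g : Matrix (Fin 2) (Fin 2) F) 1 1 = 0 := by
      by_contra h; exact Bool.false_ne_true (h4.mpr h)
    have hd := det2 g
    rw [h1, zero_mul, zero_sub] at hd
    refine ⟨Units.mk0 _ h3, Finset.mem_univ _, ?_⟩
    refine (eq_mk2 g _ h1 ?_ rfl h4).symm
    rw [Units.val_mk0]
    field_simp
    linear_combination -hd

lemma elC_eqW : elC ℤ F = ∑ p ∈ Finset.univ.filter (fun p : Fˣ × Fˣ × Fˣ => (p.1 : F) * p.2.2 ≠ 1),
    of ℤ (Matrix.SpecialLinearGroup (Fin 2) F) (tW p.1 p.2.1 p.2.2) := by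
  rw [elC]
  refine suppClass_param true true true true _ (fun p : Fˣ × Fˣ × Fˣ => tW p.1 p.2.1 p.2.2) ?_ ?_ ?_
  · rintro ⟨a, g, d⟩ - ⟨a', g', d'⟩ - h
    replace h : tW a g d = tW a' g' d' := h
    exact Prod.ext (Units.ext (by simpa [tW] using entry_eq h 0 0))
      (Prod.ext (Units.ext (by simpa [tW] using entry_eq h 1 0))
        (Units.ext (by simpa [tW] using entry_eq h 1 1)))
  · rintro ⟨a, g, d⟩ hp
    simp only [Finset.mem_filter, Finset.mem_univ, true_and] at hp
    simp [tW]
    intro h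
    exact hp (by linear_combination h)
  · intro g hg
    obtain ⟨h1, h2, h3, h4⟩ := hg
    replace h1 := h1.mp rfl
    replace h2 := h2.mp rfl
    replace h3 := h3.mp rfl
    replace h4 := h4.mp rfl
    have hd := det2 g
    refine ⟨(Units.mk0 _ h1, Units.mk0 _ h3, Units.mk0 _ h4), ?_, ?_⟩
    · simp only [Finset.mem_filter, Finset.mem_univ, true_and, Units.val_mk0]
      intro h
      have : (g : Matrix (Fin 2) (Fin 2) F) 0 1 * (g : Matrix (Fin 2) (Fin 2) F) 1 0 = 0 := by
        linear_combination h - hd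
      rcases mul_eq_zero.1 this with h' | h'
      · exact h2 h'
      · exact h3 h'
    · refine (eq_mk2 g _ rfl ?_ rfl rfl).symm
      simp only [Units.val_mk0]
      field_simp
      linear_combination -hd

lemma elDm_eqW : elDm ℤ F
    = ∑ p ∈ Finset.univ.filter (fun p : Fˣ × Fˣ × Fˣ => (p.1 : F) * p.2.2 = 1),
    of ℤ (Matrix.SpecialLinearGroup (Fin 2) F) (tW p.1 p.2.1 p.2.2) := by
  rw [elDm]
  refine suppClass_param true false true true _ (fun p : Fˣ × Fˣ × Fˣ => tW p.1 p.2.1 p.2.2) ?_ ?_ ?_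
  · rintro ⟨a, g, d⟩ - ⟨a', g', d'⟩ - h
    replace h : tW a g d = tW a' g' d' := h
    exact Prod.ext (Units.ext (by simpa [tW] using entry_eq h 0 0))
      (Prod.ext (Units.ext (by simpa [tW] using entry_eq h 1 0))
        (Units.ext (by simpa [tW] using entry_eq h 1 1)))
  · rintro ⟨a, g, d⟩ hp
    simp only [Finset.mem_filter, Finset.mem_univ, true_and] at hp
    simp [tW, sub_eq_zero.mpr hp]
  · intro g hg
    obtain ⟨h1, h2, h3, h4⟩ := hg
    replace h1 := h1.mp rfl
    replace h3 := h3.mp rfl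
    replace h4 := h4.mp rfl
    replace h2 : (g : Matrix (Fin 2) (Fin 2) F) 0 1 = 0 := by
      by_contra h; exact Bool.false_ne_true (h2.mpr h)
    have hd := det2 g
    rw [h2, zero_mul, sub_zero] at hd
    refine ⟨(Units.mk0 _ h1, Units.mk0 _ h3, Units.mk0 _ h4), ?_, ?_⟩
    · simp only [Finset.mem_filter, Finset.mem_univ, true_and, Units.val_mk0]
      exact hd
    · refine (eq_mk2 g _ rfl ?_ rfl rfl).symm
      simp only [Units.val_mk0]
      rw [h2, hd, sub_self, zero_mul]

lemma C_add_Dm : elC ℤ F + elDm ℤ F = ∑ p : Fˣ × Fˣ × Fˣ,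
    of ℤ (Matrix.SpecialLinearGroup (Fin 2) F) (tW p.1 p.2.1 p.2.2) := by
  rw [elC_eqW, elDm_eqW, add_comm]
  exact Finset.sum_filter_add_sum_filter_not _ _ _

lemma elC_eqW' : elC ℤ F
    = ∑ p ∈ Finset.univ.filter (fun p : Fˣ × Fˣ × Fˣ => (p.1 : F) * p.2.2 ≠ 1),
    of ℤ (Matrix.SpecialLinearGroup (Fin 2) F) (tW' p.1 p.2.1 p.2.2) := by
  rw [elC]
  refine suppClass_param true true true true _ (fun p : Fˣ × Fˣ × Fˣ => tW' p.1 p.2.1 p.2.2) ?_ ?_ ?_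
  · rintro ⟨a, g, d⟩ - ⟨a', g', d'⟩ - h
    replace h : tW' a g d = tW' a' g' d' := h
    exact Prod.ext (Units.ext (by simpa [tW'] using entry_eq h 0 0))
      (Prod.ext (Units.ext (by simpa [tW'] using entry_eq h 0 1))
        (Units.ext (by simpa [tW'] using entry_eq h 1 1)))
  · rintro ⟨a, g, d⟩ hp
    simp only [Finset.mem_filter, Finset.mem_univ, true_and] at hp
    simp [tW']
    intro h
    exact hp (by linear_combination h)
  · intro g hg
    obtain ⟨h1, h2, h3, h4⟩ := hg
    replace h1 := h1.mp rfl
    replace h2 := h2.mp rfl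
    replace h3 := h3.mp rfl
    replace h4 := h4.mp rfl
    have hd := det2 g
    refine ⟨(Units.mk0 _ h1, Units.mk0 _ h2, Units.mk0 _ h4), ?_, ?_⟩
    · simp only [Finset.mem_filter, Finset.mem_univ, true_and, Units.val_mk0]
      intro h
      have : (g : Matrix (Fin 2) (Fin 2) F) 0 1 * (g : Matrix (Fin 2) (Fin 2) F) 1 0 = 0 := by
        linear_combination h - hd
      rcases mul_eq_zero.1 this with h' | h'
      · exact h2 h'
      · exact h3 h'
    · refine (eq_mk2 g _ rfl rfl ?_ rfl).symm
      simp only [Units.val_mk0]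
      field_simp
      linear_combination -hd

lemma elDp_eqW' : elDp ℤ F
    = ∑ p ∈ Finset.univ.filter (fun p : Fˣ × Fˣ × Fˣ => (p.1 : F) * p.2.2 = 1),
    of ℤ (Matrix.SpecialLinearGroup (Fin 2) F) (tW' p.1 p.2.1 p.2.2) := by
  rw [elDp]
  refine suppClass_param true true false true _ (fun p : Fˣ × Fˣ × Fˣ => tW' p.1 p.2.1 p.2.2) ?_ ?_ ?_
  · rintro ⟨a, g, d⟩ - ⟨a', g', d'⟩ - h
    replace h : tW' a g d = tW' a' g' d' := h
    exact Prod.ext (Units.ext (by simpa [tW'] using entry_eq h 0 0))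
      (Prod.ext (Units.ext (by simpa [tW'] using entry_eq h 0 1))
        (Units.ext (by simpa [tW'] using entry_eq h 1 1)))
  · rintro ⟨a, g, d⟩ hp
    simp only [Finset.mem_filter, Finset.mem_univ, true_and] at hp
    simp [tW', sub_eq_zero.mpr hp]
  · intro g hg
    obtain ⟨h1, h2, h3, h4⟩ := hg
    replace h1 := h1.mp rfl
    replace h2 := h2.mp rfl
    replace h4 := h4.mp rfl
    replace h3 : (g : Matrix (Fin 2) (Fin 2) F) 1 0 = 0 := by
      by_contra h; exact Bool.false_ne_true (h3.mpr h)
    have hd := det2 g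
    rw [h3, mul_zero, sub_zero] at hd
    refine ⟨(Units.mk0 _ h1, Units.mk0 _ h2, Units.mk0 _ h4), ?_, ?_⟩
    · simp only [Finset.mem_filter, Finset.mem_univ, true_and, Units.val_mk0]
      exact hd
    · refine (eq_mk2 g _ rfl rfl ?_ rfl).symm
      simp only [Units.val_mk0]
      rw [h3, hd, sub_self, zero_mul]

lemma C_add_Dp : elC ℤ F + elDp ℤ F = ∑ p : Fˣ × Fˣ × Fˣ,
    of ℤ (Matrix.SpecialLinearGroup (Fin 2) F) (tW' p.1 p.2.1 p.2.2) := by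
  rw [elC_eqW', elDp_eqW', add_comm]
  exact Finset.sum_filter_add_sum_filter_not _ _ _


noncomputable def tQ (g : Fˣ) (s : F) : Matrix.SpecialLinearGroup (Fin 2) F :=
  mk2 s (-(g : F)⁻¹) g 0 (by field_simp; ring)

noncomputable def tQ' (g : Fˣ) (s : F) : Matrix.SpecialLinearGroup (Fin 2) F :=
  mk2 0 (-(g : F)⁻¹) g s (by field_simp; ring)

lemma tQ_zero (g : Fˣ) : tQ g 0 = tV g := Subtype.ext rfl
lemma tQ_unit (g s : Fˣ) : tQ g (s : F) = tU s g := Subtype.ext rfl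
lemma tQ'_zero (g : Fˣ) : tQ' g 0 = tV g := Subtype.ext rfl
lemma tQ'_unit (g s : Fˣ) : tQ' g (s : F) = tP g s := Subtype.ext rfl

lemma tT_mul_tU (u v x z : Fˣ) :
    tT u v * tU x z = tQ (u⁻¹ * z) ((u : F) * x + v * z) := by
  apply Subtype.ext
  rw [Matrix.SpecialLinearGroup.coe_mul]
  simp only [tT, tU, tQ, mk2_coe]
  rw [Matrix.mul_fin_two]
  ext i j
  fin_cases i <;> fin_cases j <;>
    simp [Units.val_mul, Units.val_inv_eq_inv_val, Units.val_neg] <;> field_simp <;> ring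

lemma tL_mul_tP (u g z d : Fˣ) :
    tL u g * tP z d = tQ' (u⁻¹ * z) ((u : F)⁻¹ * d + (-((g : F) * (z : F)⁻¹))) := by
  apply Subtype.ext
  rw [Matrix.SpecialLinearGroup.coe_mul]
  simp only [tL, tP, tQ', mk2_coe]
  rw [Matrix.mul_fin_two]
  ext i j
  fin_cases i <;> fin_cases j <;>
    simp [Units.val_mul, Units.val_inv_eq_inv_val, Units.val_neg] <;> field_simp <;> ring

lemma tU_mul_tT (x z u v : Fˣ) :
    tU x z * tT u v = tW (x * u) (z * u) (z * v) := by
  apply Subtype.ext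
  rw [Matrix.SpecialLinearGroup.coe_mul]
  simp only [tU, tT, tW, mk2_coe]
  rw [Matrix.mul_fin_two]
  ext i j
  fin_cases i <;> fin_cases j <;>
    simp [Units.val_mul, Units.val_inv_eq_inv_val, Units.val_neg] <;> field_simp <;> ring

lemma tL_mul_tU (u g x z : Fˣ) :
    tL u g * tU x z = tW' (u * x) (-(u * z⁻¹)) (-(g * z⁻¹)) := by
  apply Subtype.ext
  rw [Matrix.SpecialLinearGroup.coe_mul]
  simp only [tL, tU, tW', mk2_coe]
  rw [Matrix.mul_fin_two]
  ext i j
  fin_cases i <;> fin_cases j <;>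
    simp [Units.val_mul, Units.val_inv_eq_inv_val, Units.val_neg] <;> field_simp <;> ring

lemma sg_mul_tL (u g : Fˣ) : (sg : Matrix.SpecialLinearGroup (Fin 2) F) * tL u g = tU g (-u) := by
  apply Subtype.ext
  rw [Matrix.SpecialLinearGroup.coe_mul]
  simp only [sg, tL, tU, mk2_coe]
  rw [Matrix.mul_fin_two]
  ext i j
  fin_cases i <;> fin_cases j <;>
    simp [Units.val_mul, Units.val_inv_eq_inv_val, Units.val_neg] <;> field_simp <;> ring

lemma tT_mul_sg (u v : Fˣ) : tT u v * (sg : Matrix.SpecialLinearGroup (Fin 2) F)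
    = tU (-v) (-(u⁻¹)) := by
  apply Subtype.ext
  rw [Matrix.SpecialLinearGroup.coe_mul]
  simp only [sg, tT, tU, mk2_coe]
  rw [Matrix.mul_fin_two]
  ext i j
  fin_cases i <;> fin_cases j <;>
    simp [Units.val_mul, Units.val_inv_eq_inv_val, Units.val_neg] <;> field_simp <;> ring

lemma sg_mul_tT (u v : Fˣ) : (sg : Matrix.SpecialLinearGroup (Fin 2) F) * tT u v
    = tP (-u) (-v) := by
  apply Subtype.ext
  rw [Matrix.SpecialLinearGroup.coe_mul]
  simp only [sg, tT, tP, mk2_coe]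
  rw [Matrix.mul_fin_two]
  ext i j
  fin_cases i <;> fin_cases j <;>
    simp [Units.val_mul, Units.val_inv_eq_inv_val, Units.val_neg] <;> field_simp <;> ring

lemma tL_mul_sg (u g : Fˣ) : tL u g * (sg : Matrix.SpecialLinearGroup (Fin 2) F)
    = tP (-(u⁻¹)) g := by
  apply Subtype.ext
  rw [Matrix.SpecialLinearGroup.coe_mul]
  simp only [sg, tL, tP, mk2_coe]
  rw [Matrix.mul_fin_two]
  ext i j
  fin_cases i <;> fin_cases j <;>
    simp [Units.val_mul, Units.val_inv_eq_inv_val, Units.val_neg] <;> field_simp <;> ring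


noncomputable def eM3 : ((Fˣ × Fˣ) × (Fˣ × Fˣ)) ≃ ((Fˣ × Fˣ × Fˣ) × Fˣ) where
  toFun r := ((r.1.1 * r.2.1, r.1.2 * r.2.1, r.1.2 * r.2.2), r.2.1)
  invFun t := ((t.1.1 * t.2⁻¹, t.1.2.1 * t.2⁻¹), (t.2, t.1.2.2 * (t.1.2.1 * t.2⁻¹)⁻¹))
  left_inv := by
    rintro ⟨⟨x, z⟩, u, v⟩
    refine Prod.ext (Prod.ext ?_ ?_) (Prod.ext ?_ ?_) <;> ext <;> simp only [Units.val_mul, Units.val_inv_eq_inv_val, Units.val_neg] <;> field_simp <;> ring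
  right_inv := by
    rintro ⟨⟨a, g, d⟩, u⟩
    refine Prod.ext (Prod.ext ?_ (Prod.ext ?_ ?_)) ?_ <;> ext <;> simp only [Units.val_mul, Units.val_inv_eq_inv_val, Units.val_neg] <;> field_simp <;> ring

lemma M3 : elEp ℤ F * elDp ℤ F
    = (Fintype.card Fˣ) • (elC ℤ F + elDm ℤ F) := by
  rw [elEp_eq, elDp_eq, Finset.sum_mul_sum]
  simp_rw [← map_mul, tU_mul_tT]
  rw [← Fintype.sum_prod_type (f := fun r : (Fˣ × Fˣ) × (Fˣ × Fˣ) =>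
    of ℤ (Matrix.SpecialLinearGroup (Fin 2) F) (tW (r.1.1 * r.2.1) (r.1.2 * r.2.1) (r.1.2 * r.2.2)))]
  rw [Fintype.sum_equiv eM3
    (fun r : (Fˣ × Fˣ) × (Fˣ × Fˣ) =>
      of ℤ (Matrix.SpecialLinearGroup (Fin 2) F) (tW (r.1.1 * r.2.1) (r.1.2 * r.2.1) (r.1.2 * r.2.2)))
    (fun t => of ℤ (Matrix.SpecialLinearGroup (Fin 2) F) (tW t.1.1 t.1.2.1 t.1.2.2))
    (fun _ => rfl)]
  rw [Fintype.sum_prod_type (f := fun x : (Fˣ × Fˣ × Fˣ) × Fˣ =>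
    of ℤ (Matrix.SpecialLinearGroup (Fin 2) F) (tW x.1.1 x.1.2.1 x.1.2.2))]
  rw [C_add_Dm]
  simp only [Finset.sum_const, Finset.card_univ]
  rw [← Finset.smul_sum]


noncomputable def eM4 : ((Fˣ × Fˣ) × (Fˣ × Fˣ)) ≃ ((Fˣ × Fˣ × Fˣ) × Fˣ) where
  toFun r := ((r.1.1 * r.2.1, -(r.1.1 * r.2.2⁻¹), -(r.1.2 * r.2.2⁻¹)), r.1.1)
  invFun t := ((t.2, t.1.2.2 * t.2 * t.1.2.1⁻¹), (t.2⁻¹ * t.1.1, -(t.2 * t.1.2.1⁻¹)))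
  left_inv := by
    rintro ⟨⟨u, g⟩, x, z⟩
    refine Prod.ext (Prod.ext ?_ ?_) (Prod.ext ?_ ?_) <;> ext <;> simp only [Units.val_mul, Units.val_inv_eq_inv_val, Units.val_neg] <;> field_simp <;> ring
  right_inv := by
    rintro ⟨⟨a, b, d⟩, u⟩
    refine Prod.ext (Prod.ext ?_ (Prod.ext ?_ ?_)) ?_ <;> ext <;> simp only [Units.val_mul, Units.val_inv_eq_inv_val, Units.val_neg] <;> field_simp <;> ring

lemma M4 : elDm ℤ F * elEp ℤ F
    = (Fintype.card Fˣ) • (elC ℤ F + elDp ℤ F) := by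
  rw [elDm_eq, elEp_eq, Finset.sum_mul_sum]
  simp_rw [← map_mul, tL_mul_tU]
  rw [← Fintype.sum_prod_type (f := fun r : (Fˣ × Fˣ) × (Fˣ × Fˣ) =>
    of ℤ (Matrix.SpecialLinearGroup (Fin 2) F)
      (tW' (r.1.1 * r.2.1) (-(r.1.1 * r.2.2⁻¹)) (-(r.1.2 * r.2.2⁻¹))))]
  rw [Fintype.sum_equiv eM4
    (fun r : (Fˣ × Fˣ) × (Fˣ × Fˣ) =>
      of ℤ (Matrix.SpecialLinearGroup (Fin 2) F)
        (tW' (r.1.1 * r.2.1) (-(r.1.1 * r.2.2⁻¹)) (-(r.1.2 * r.2.2⁻¹))))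
    (fun t => of ℤ (Matrix.SpecialLinearGroup (Fin 2) F) (tW' t.1.1 t.1.2.1 t.1.2.2))
    (fun _ => rfl)]
  rw [Fintype.sum_prod_type (f := fun x : (Fˣ × Fˣ × Fˣ) × Fˣ =>
    of ℤ (Matrix.SpecialLinearGroup (Fin 2) F) (tW' x.1.1 x.1.2.1 x.1.2.2))]
  rw [C_add_Dp]
  simp only [Finset.sum_const, Finset.card_univ]
  rw [← Finset.smul_sum]


noncomputable def eA : ((Fˣ × Fˣ) × Fˣ) ≃ ((Fˣ × Fˣ) × Fˣ) where
  toFun r := (r.1, r.1.1⁻¹ * r.2)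
  invFun r := (r.1, r.1.1 * r.2)
  left_inv := by rintro ⟨⟨u, v⟩, z⟩; simp
  right_inv := by rintro ⟨⟨u, v⟩, z⟩; simp

noncomputable def eC : ((Fˣ × Fˣ) × Fˣ) ≃ (Fˣ × (Fˣ × Fˣ)) where
  toFun r := (r.1.1, (r.1.2 * r.2, r.1.1⁻¹ * r.2))
  invFun t := ((t.1, t.2.1 * (t.1 * t.2.2)⁻¹), t.1 * t.2.2)
  left_inv := by
    rintro ⟨⟨u, v⟩, z⟩
    refine Prod.ext (Prod.ext ?_ ?_) ?_ <;> ext <;> simp only [Units.val_mul, Units.val_inv_eq_inv_val, Units.val_neg] <;> field_simp <;> ring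
  right_inv := by
    rintro ⟨u, t, g⟩
    refine Prod.ext ?_ (Prod.ext ?_ ?_) <;> ext <;> simp only [Units.val_mul, Units.val_inv_eq_inv_val, Units.val_neg] <;> field_simp <;> ring

lemma termA : (∑ r : (Fˣ × Fˣ) × Fˣ, of ℤ (Matrix.SpecialLinearGroup (Fin 2) F) (tV (r.1.1⁻¹ * r.2)))
    = (Fintype.card Fˣ * Fintype.card Fˣ) • elB ℤ F := by
  rw [Fintype.sum_equiv eA
    (fun r : (Fˣ × Fˣ) × Fˣ => of ℤ (Matrix.SpecialLinearGroup (Fin 2) F) (tV (r.1.1⁻¹ * r.2)))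
    (fun r : (Fˣ × Fˣ) × Fˣ => of ℤ (Matrix.SpecialLinearGroup (Fin 2) F) (tV r.2)) (fun _ => rfl)]
  rw [Fintype.sum_prod_type (f := fun r : (Fˣ × Fˣ) × Fˣ => of ℤ (Matrix.SpecialLinearGroup (Fin 2) F) (tV r.2)), elB_eq]
  simp [Finset.sum_const, Finset.card_univ, Fintype.card_prod]

lemma termS : (∑ r : (Fˣ × Fˣ) × Fˣ, ∑ s : Fˣ, of ℤ (Matrix.SpecialLinearGroup (Fin 2) F) (tU s (r.1.1⁻¹ * r.2)))
    = (Fintype.card Fˣ * Fintype.card Fˣ) • elEp ℤ F := by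
  rw [Fintype.sum_equiv eA
    (fun r : (Fˣ × Fˣ) × Fˣ => ∑ s : Fˣ, of ℤ (Matrix.SpecialLinearGroup (Fin 2) F) (tU s (r.1.1⁻¹ * r.2)))
    (fun r : (Fˣ × Fˣ) × Fˣ => ∑ s : Fˣ, of ℤ (Matrix.SpecialLinearGroup (Fin 2) F) (tU s r.2)) (fun _ => rfl)]
  rw [Fintype.sum_prod_type (f := fun r : (Fˣ × Fˣ) × Fˣ => ∑ s : Fˣ, of ℤ (Matrix.SpecialLinearGroup (Fin 2) F) (tU s r.2))]
  have : (∑ z : Fˣ, ∑ s : Fˣ, of ℤ (Matrix.SpecialLinearGroup (Fin 2) F) (tU s z)) = elEp ℤ F := by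
    rw [elEp_eq, Finset.sum_comm,
      Fintype.sum_prod_type (f := fun p : Fˣ × Fˣ => of ℤ (Matrix.SpecialLinearGroup (Fin 2) F) (tU p.1 p.2))]
  refine Eq.trans (Finset.sum_congr rfl fun x _ => this) ?_
  simp [Finset.sum_const, Finset.card_univ, Fintype.card_prod]

lemma termC : (∑ r : (Fˣ × Fˣ) × Fˣ, of ℤ (Matrix.SpecialLinearGroup (Fin 2) F) (tU (r.1.2 * r.2) (r.1.1⁻¹ * r.2)))
    = (Fintype.card Fˣ) • elEp ℤ F := by
  rw [Fintype.sum_equiv eC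
    (fun r : (Fˣ × Fˣ) × Fˣ => of ℤ (Matrix.SpecialLinearGroup (Fin 2) F) (tU (r.1.2 * r.2) (r.1.1⁻¹ * r.2)))
    (fun t : Fˣ × (Fˣ × Fˣ) => of ℤ (Matrix.SpecialLinearGroup (Fin 2) F) (tU t.2.1 t.2.2)) (fun _ => rfl)]
  rw [Fintype.sum_prod_type (f := fun t : Fˣ × (Fˣ × Fˣ) => of ℤ (Matrix.SpecialLinearGroup (Fin 2) F) (tU t.2.1 t.2.2))]
  refine Eq.trans (Finset.sum_congr rfl fun x _ => elEp_eq.symm) ?_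
  simp [Finset.sum_const, Finset.card_univ]

lemma M1 : elDp ℤ F * elEp ℤ F
    = (Fintype.card Fˣ * Fintype.card Fˣ) • elB ℤ F
      + ((Fintype.card Fˣ * Fintype.card Fˣ) • elEp ℤ F - (Fintype.card Fˣ) • elEp ℤ F) := by
  rw [elDp_eq, elEp_eq, Finset.sum_mul_sum]
  simp_rw [← map_mul, tT_mul_tU]
  have inner : ∀ u v : Fˣ, (∑ q : Fˣ × Fˣ, of ℤ (Matrix.SpecialLinearGroup (Fin 2) F) (tQ (u⁻¹ * q.2) ((u : F) * q.1 + (v : F) * q.2)))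
      = ∑ z : Fˣ, ((of ℤ (Matrix.SpecialLinearGroup (Fin 2) F) (tV (u⁻¹ * z)) + ∑ s : Fˣ, of ℤ (Matrix.SpecialLinearGroup (Fin 2) F) (tU s (u⁻¹ * z)))
          - of ℤ (Matrix.SpecialLinearGroup (Fin 2) F) (tU (v * z) (u⁻¹ * z))) := by
    intro u v
    rw [Fintype.sum_prod_type_right (f := fun q : Fˣ × Fˣ =>
      of ℤ (Matrix.SpecialLinearGroup (Fin 2) F) (tQ (u⁻¹ * q.2) ((u : F) * q.1 + (v : F) * q.2)))]
    refine Finset.sum_congr rfl fun z _ => ?_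
    rw [sum_units_affine (fun s => of ℤ (Matrix.SpecialLinearGroup (Fin 2) F) (tQ (u⁻¹ * z) s)) (u : F) ((v : F) * z) u.ne_zero]
    rw [sum_field_split (fun s => of ℤ (Matrix.SpecialLinearGroup (Fin 2) F) (tQ (u⁻¹ * z) s))]
    rw [show ((v : F) * z) = ((v * z : Fˣ) : F) from rfl]
    rw [tQ_zero, tQ_unit]
    simp_rw [tQ_unit]
  simp_rw [inner]
  rw [← Fintype.sum_prod_type (f := fun r : (Fˣ × Fˣ) × Fˣ =>
    ((of ℤ (Matrix.SpecialLinearGroup (Fin 2) F) (tV (r.1.1⁻¹ * r.2)) + ∑ s : Fˣ, of ℤ (Matrix.SpecialLinearGroup (Fin 2) F) (tU s (r.1.1⁻¹ * r.2)))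
        - of ℤ (Matrix.SpecialLinearGroup (Fin 2) F) (tU (r.1.2 * r.2) (r.1.1⁻¹ * r.2))))]
  rw [Finset.sum_sub_distrib, Finset.sum_add_distrib]
  rw [termA, termS, termC, elEp_eq]
  abel


noncomputable def eC2 : ((Fˣ × Fˣ) × Fˣ) ≃ (Fˣ × (Fˣ × Fˣ)) where
  toFun r := (r.1.1, (r.1.1⁻¹ * r.2, -(r.1.2 * r.2⁻¹)))
  invFun t := ((t.1, -(t.2.2 * t.1 * t.2.1)), t.1 * t.2.1)
  left_inv := by
    rintro ⟨⟨u, g⟩, z⟩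
    refine Prod.ext (Prod.ext ?_ ?_) ?_ <;> ext <;> simp only [Units.val_mul, Units.val_inv_eq_inv_val, Units.val_neg] <;> field_simp <;> ring
  right_inv := by
    rintro ⟨u, γ, t⟩
    refine Prod.ext ?_ (Prod.ext ?_ ?_) <;> ext <;> simp only [Units.val_mul, Units.val_inv_eq_inv_val, Units.val_neg] <;> field_simp <;> ring

lemma termS2 : (∑ r : (Fˣ × Fˣ) × Fˣ, ∑ s : Fˣ,
      of ℤ (Matrix.SpecialLinearGroup (Fin 2) F) (tP (r.1.1⁻¹ * r.2) s))
    = (Fintype.card Fˣ * Fintype.card Fˣ) • elEm ℤ F := by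
  rw [Fintype.sum_equiv eA
    (fun r : (Fˣ × Fˣ) × Fˣ => ∑ s : Fˣ, of ℤ (Matrix.SpecialLinearGroup (Fin 2) F) (tP (r.1.1⁻¹ * r.2) s))
    (fun r : (Fˣ × Fˣ) × Fˣ => ∑ s : Fˣ, of ℤ (Matrix.SpecialLinearGroup (Fin 2) F) (tP r.2 s)) (fun _ => rfl)]
  rw [Fintype.sum_prod_type (f := fun r : (Fˣ × Fˣ) × Fˣ =>
    ∑ s : Fˣ, of ℤ (Matrix.SpecialLinearGroup (Fin 2) F) (tP r.2 s))]
  have : (∑ z : Fˣ, ∑ s : Fˣ, of ℤ (Matrix.SpecialLinearGroup (Fin 2) F) (tP z s)) = elEm ℤ F := by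
    rw [elEm_eq, Fintype.sum_prod_type (f := fun p : Fˣ × Fˣ =>
      of ℤ (Matrix.SpecialLinearGroup (Fin 2) F) (tP p.1 p.2))]
  refine Eq.trans (Finset.sum_congr rfl fun x _ => this) ?_
  simp [Finset.sum_const, Finset.card_univ, Fintype.card_prod]

lemma termC2 : (∑ r : (Fˣ × Fˣ) × Fˣ,
      of ℤ (Matrix.SpecialLinearGroup (Fin 2) F) (tP (r.1.1⁻¹ * r.2) (-(r.1.2 * r.2⁻¹))))
    = (Fintype.card Fˣ) • elEm ℤ F := by
  rw [Fintype.sum_equiv eC2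
    (fun r : (Fˣ × Fˣ) × Fˣ =>
      of ℤ (Matrix.SpecialLinearGroup (Fin 2) F) (tP (r.1.1⁻¹ * r.2) (-(r.1.2 * r.2⁻¹))))
    (fun t : Fˣ × (Fˣ × Fˣ) => of ℤ (Matrix.SpecialLinearGroup (Fin 2) F) (tP t.2.1 t.2.2)) (fun _ => rfl)]
  rw [Fintype.sum_prod_type (f := fun t : Fˣ × (Fˣ × Fˣ) =>
    of ℤ (Matrix.SpecialLinearGroup (Fin 2) F) (tP t.2.1 t.2.2))]
  refine Eq.trans (Finset.sum_congr rfl fun x _ => elEm_eq.symm) ?_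
  simp [Finset.sum_const, Finset.card_univ]

lemma M2 : elDm ℤ F * elEm ℤ F
    = (Fintype.card Fˣ * Fintype.card Fˣ) • elB ℤ F
      + ((Fintype.card Fˣ * Fintype.card Fˣ) • elEm ℤ F - (Fintype.card Fˣ) • elEm ℤ F) := by
  rw [elDm_eq, elEm_eq, Finset.sum_mul_sum]
  simp_rw [← map_mul, tL_mul_tP]
  have inner : ∀ u g : Fˣ, (∑ q : Fˣ × Fˣ, of ℤ (Matrix.SpecialLinearGroup (Fin 2) F)
        (tQ' (u⁻¹ * q.1) ((u : F)⁻¹ * q.2 + (-((g : F) * (q.1 : F)⁻¹)))))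
      = ∑ z : Fˣ, ((of ℤ (Matrix.SpecialLinearGroup (Fin 2) F) (tV (u⁻¹ * z))
            + ∑ s : Fˣ, of ℤ (Matrix.SpecialLinearGroup (Fin 2) F) (tP (u⁻¹ * z) s))
          - of ℤ (Matrix.SpecialLinearGroup (Fin 2) F) (tP (u⁻¹ * z) (-(g * z⁻¹)))) := by
    intro u g
    rw [Fintype.sum_prod_type (f := fun q : Fˣ × Fˣ => of ℤ (Matrix.SpecialLinearGroup (Fin 2) F)
      (tQ' (u⁻¹ * q.1) ((u : F)⁻¹ * q.2 + (-((g : F) * (q.1 : F)⁻¹)))))]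
    refine Finset.sum_congr rfl fun z _ => ?_
    rw [sum_units_affine (fun s => of ℤ (Matrix.SpecialLinearGroup (Fin 2) F) (tQ' (u⁻¹ * z) s))
      ((u : F)⁻¹) (-((g : F) * (z : F)⁻¹)) (inv_ne_zero u.ne_zero)]
    rw [sum_field_split (fun s => of ℤ (Matrix.SpecialLinearGroup (Fin 2) F) (tQ' (u⁻¹ * z) s))]
    rw [show (-((g : F) * (z : F)⁻¹)) = ((-(g * z⁻¹) : Fˣ) : F) by push_cast; ring]
    rw [tQ'_zero, tQ'_unit]
    simp_rw [tQ'_unit]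
  simp_rw [inner]
  rw [← Fintype.sum_prod_type (f := fun r : (Fˣ × Fˣ) × Fˣ =>
    ((of ℤ (Matrix.SpecialLinearGroup (Fin 2) F) (tV (r.1.1⁻¹ * r.2))
        + ∑ s : Fˣ, of ℤ (Matrix.SpecialLinearGroup (Fin 2) F) (tP (r.1.1⁻¹ * r.2) s))
        - of ℤ (Matrix.SpecialLinearGroup (Fin 2) F) (tP (r.1.1⁻¹ * r.2) (-(r.1.2 * r.2⁻¹)))))]
  rw [Finset.sum_sub_distrib, Finset.sum_add_distrib]
  rw [termA, termS2, termC2, elEm_eq]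
  abel


lemma sg_mul_elDm : of ℤ (Matrix.SpecialLinearGroup (Fin 2) F) sg * elDm ℤ F = elEp ℤ F := by
  rw [elDm_eq, Finset.mul_sum]
  simp_rw [← map_mul, sg_mul_tL]
  rw [elEp_eq]
  exact Fintype.sum_equiv
    ⟨fun p : Fˣ × Fˣ => (p.2, -p.1), fun p : Fˣ × Fˣ => (-p.2, p.1),
      by rintro ⟨u, g⟩; simp, by rintro ⟨x, z⟩; simp⟩
    (fun p : Fˣ × Fˣ => of ℤ (Matrix.SpecialLinearGroup (Fin 2) F) (tU p.2 (-p.1)))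
    (fun p : Fˣ × Fˣ => of ℤ (Matrix.SpecialLinearGroup (Fin 2) F) (tU p.1 p.2)) (fun _ => rfl)

lemma sg_mul_elDp : of ℤ (Matrix.SpecialLinearGroup (Fin 2) F) sg * elDp ℤ F = elEm ℤ F := by
  rw [elDp_eq, Finset.mul_sum]
  simp_rw [← map_mul, sg_mul_tT]
  rw [elEm_eq]
  exact Fintype.sum_equiv
    ⟨fun p : Fˣ × Fˣ => (-p.1, -p.2), fun p : Fˣ × Fˣ => (-p.1, -p.2),
      by rintro ⟨u, v⟩; simp, by rintro ⟨z, d⟩; simp⟩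
    (fun p : Fˣ × Fˣ => of ℤ (Matrix.SpecialLinearGroup (Fin 2) F) (tP (-p.1) (-p.2)))
    (fun p : Fˣ × Fˣ => of ℤ (Matrix.SpecialLinearGroup (Fin 2) F) (tP p.1 p.2)) (fun _ => rfl)

lemma elDp_mul_sg : elDp ℤ F * of ℤ (Matrix.SpecialLinearGroup (Fin 2) F) sg = elEp ℤ F := by
  rw [elDp_eq, Finset.sum_mul]
  simp_rw [← map_mul, tT_mul_sg]
  rw [elEp_eq]
  exact Fintype.sum_equiv
    ⟨fun p : Fˣ × Fˣ => (-p.2, -p.1⁻¹), fun p : Fˣ × Fˣ => ((-p.2)⁻¹, -p.1),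
      by rintro ⟨u, v⟩; simp, by rintro ⟨x, z⟩; simp⟩
    (fun p : Fˣ × Fˣ => of ℤ (Matrix.SpecialLinearGroup (Fin 2) F) (tU (-p.2) (-p.1⁻¹)))
    (fun p : Fˣ × Fˣ => of ℤ (Matrix.SpecialLinearGroup (Fin 2) F) (tU p.1 p.2)) (fun _ => rfl)

lemma elDm_mul_sg : elDm ℤ F * of ℤ (Matrix.SpecialLinearGroup (Fin 2) F) sg = elEm ℤ F := by
  rw [elDm_eq, Finset.sum_mul]
  simp_rw [← map_mul, tL_mul_sg]
  rw [elEm_eq]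
  exact Fintype.sum_equiv
    ⟨fun p : Fˣ × Fˣ => (-p.1⁻¹, p.2), fun p : Fˣ × Fˣ => ((-p.1)⁻¹, p.2),
      by rintro ⟨u, g⟩; simp, by rintro ⟨z, d⟩; simp⟩
    (fun p : Fˣ × Fˣ => of ℤ (Matrix.SpecialLinearGroup (Fin 2) F) (tP (-p.1⁻¹) p.2))
    (fun p : Fˣ × Fˣ => of ℤ (Matrix.SpecialLinearGroup (Fin 2) F) (tP p.1 p.2)) (fun _ => rfl)

end SLAux

open SLAux in
theorem elD_mul_elE (F : Type*) [Field F] [Fintype F] [DecidableEq F]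
    (hq : 2 < Fintype.card F) (q : ℤ) (hqc : q = Fintype.card F) :
    elDp ℤ F * elEp ℤ F = (q - 1) ^ 2 • elB ℤ F + ((q - 1) * (q - 2)) • elEp ℤ F ∧
    elEp ℤ F * elDm ℤ F = (q - 1) ^ 2 • elB ℤ F + ((q - 1) * (q - 2)) • elEp ℤ F ∧
    elEm ℤ F * elDp ℤ F = (q - 1) ^ 2 • elB ℤ F + ((q - 1) * (q - 2)) • elEm ℤ F ∧
    elDm ℤ F * elEm ℤ F = (q - 1) ^ 2 • elB ℤ F + ((q - 1) * (q - 2)) • elEm ℤ F ∧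
    elEp ℤ F * elDp ℤ F = (q - 1) • (elC ℤ F + elDm ℤ F) ∧
    elDp ℤ F * elEm ℤ F = (q - 1) • (elC ℤ F + elDm ℤ F) ∧
    elDm ℤ F * elEp ℤ F = (q - 1) • (elC ℤ F + elDp ℤ F) ∧
    elEm ℤ F * elDm ℤ F = (q - 1) • (elC ℤ F + elDp ℤ F) := by
  have hn : ((Fintype.card Fˣ : ℕ) : ℤ) = q - 1 := by
    rw [Fintype.card_units, hqc, Nat.cast_sub (by omega)]
    simp
  have convB : ∀ X : MonoidAlgebra ℤ (Matrix.SpecialLinearGroup (Fin 2) F),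
      (Fintype.card Fˣ * Fintype.card Fˣ) • elB ℤ F
        + ((Fintype.card Fˣ * Fintype.card Fˣ) • X - (Fintype.card Fˣ) • X)
      = (q - 1) ^ 2 • elB ℤ F + ((q - 1) * (q - 2)) • X := by
    intro X
    simp only [← Nat.cast_smul_eq_nsmul ℤ]
    push_cast
    rw [hn, ← sub_smul]
    rw [show ((q - 1) * (q - 1) - (q - 1) : ℤ) = (q - 1) * (q - 2) from by ring,
      show ((q - 1) * (q - 1) : ℤ) = (q - 1) ^ 2 from by ring]
  have convC : ∀ X : MonoidAlgebra ℤ (Matrix.SpecialLinearGroup (Fin 2) F),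
      (Fintype.card Fˣ) • X = (q - 1) • X := by
    intro X
    rw [← Nat.cast_smul_eq_nsmul ℤ, hn]
  have h2 : elEp ℤ F * elDm ℤ F = elDp ℤ F * elEp ℤ F := by
    conv_lhs => rw [← elDp_mul_sg]
    rw [mul_assoc, sg_mul_elDm]
  have h3 : elEm ℤ F * elDp ℤ F = elDm ℤ F * elEm ℤ F := by
    conv_lhs => rw [← elDm_mul_sg]
    rw [mul_assoc, sg_mul_elDp]
  have h6 : elDp ℤ F * elEm ℤ F = elEp ℤ F * elDp ℤ F := by
    conv_lhs => rw [← sg_mul_elDp]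
    rw [← mul_assoc, elDp_mul_sg]
  have h8 : elEm ℤ F * elDm ℤ F = elDm ℤ F * elEp ℤ F := by
    conv_lhs => rw [← elDm_mul_sg]
    rw [mul_assoc, sg_mul_elDm]
  refine ⟨by rw [M1]; exact convB _,
    by rw [h2, M1]; exact convB _,
    by rw [h3, M2]; exact convB _,
    by rw [M2]; exact convB _,
    by rw [M3]; exact convC _,
    by rw [h6, M3]; exact convC _,
    by rw [M4]; exact convC _,
    by rw [h8, M4]; exact convC _⟩
end
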